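/- arXiv:2601.18608 — 8 statements merged into one kernel-verified Lean document; each statement's English description precedes it below -/
import Mathlib

section
/- Let d ≥ 2, let ν : 2^D → ℝ be a cooperative game on D = {1,…,d} with ν(∅) = 0, and let I be an interaction frontier. Suppose the vector φ^I ∈ ℝ^{D∪I} minimizes the PolySHAP objective Σ_{S ⊆ D} μ(S)·(ν(S) − Σ_{T ∈ D∪I, T ⊆ S} φ_T)² subject to the efficiency constraint Σ_{T ∈ D∪I} φ_T = ν(D). Then for every player i ∈ D, the Shapley value is recovered as φ_i^SV[ν] = φ^I_{{i}} + Σ_{S ∈ I : i ∈ S} φ^I_S / |S|. -/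
open Finset

/-- Shapley value of player `i` in the game `ν` on `D = Fin d`. -/
noncomputable def shapley (d : ℕ) (ν : Finset (Fin d) → ℝ) (i : Fin d) : ℝ :=
  (1 / (d : ℝ)) * ∑ S ∈ ((Finset.univ : Finset (Fin d)).erase i).powerset,
    (ν (insert i S) - ν S) / ((d - 1).choose S.card : ℝ)

/-- Shapley kernel weights `μ(S)`. -/
noncomputable def shapleyWeight (d : ℕ) (S : Finset (Fin d)) : ℝ :=
  if 0 < S.card ∧ S.card < d then 1 / ((d - 2).choose (S.card - 1) : ℝ) else 0

noncomputable def coefSV (d : ℕ) (i : Fin d) (S : Finset (Fin d)) : ℝ :=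
  if i ∈ S then 1 / ((d : ℝ) * ((d - 1).choose (S.card - 1) : ℕ)) else
    -(1 / ((d : ℝ) * ((d - 1).choose S.card : ℕ)))

lemma pow_filter (d : ℕ) (i : Fin d) :
    ((Finset.univ : Finset (Fin d)).erase i).powerset
      = Finset.univ.filter (fun S => i ∉ S) := by
  ext S
  simp [Finset.subset_erase]

lemma shapley_eq_sum_coef (d : ℕ) (ν : Finset (Fin d) → ℝ) (i : Fin d) :
    shapley d ν i = ∑ S : Finset (Fin d), coefSV d i S * ν S := by
  rw [shapley, pow_filter, Finset.mul_sum]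
  rw [← Finset.sum_filter_add_sum_filter_not Finset.univ (fun S : Finset (Fin d) => i ∈ S)
    (fun S => coefSV d i S * ν S)]
  have hL : ∀ S ∈ Finset.univ.filter (fun S : Finset (Fin d) => i ∉ S),
      1/(d:ℝ) * ((ν (insert i S) - ν S) / ((d-1).choose S.card : ℕ))
      = ν (insert i S) / ((d:ℝ) * ((d-1).choose S.card : ℕ))
        - ν S / ((d:ℝ) * ((d-1).choose S.card : ℕ)) := by
    intro S _
    push_cast
    ring
  rw [Finset.sum_congr rfl hL, Finset.sum_sub_distrib]
  have h1 : ∑ S ∈ Finset.univ.filter (fun S : Finset (Fin d) => i ∉ S),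
      ν (insert i S) / ((d:ℝ) * ((d-1).choose S.card : ℕ))
      = ∑ S ∈ Finset.univ.filter (fun S : Finset (Fin d) => i ∈ S),
        coefSV d i S * ν S := by
    apply Finset.sum_nbij' (i := fun S => insert i S) (j := fun S => S.erase i)
    · intro S hS
      simp only [Finset.mem_filter, Finset.mem_univ, true_and] at hS ⊢
      exact Finset.mem_insert_self i S
    · intro S hS
      simp only [Finset.mem_filter, Finset.mem_univ, true_and] at hS ⊢
      exact Finset.notMem_erase i S
    · intro S hS
      simp only [Finset.mem_filter, Finset.mem_univ, true_and] at hS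
      exact Finset.erase_insert hS
    · intro S hS
      simp only [Finset.mem_filter, Finset.mem_univ, true_and] at hS
      exact Finset.insert_erase hS
    · intro S hS
      simp only [Finset.mem_filter, Finset.mem_univ, true_and] at hS
      rw [coefSV, if_pos (Finset.mem_insert_self i S),
        Finset.card_insert_of_notMem hS]
      simp only [Nat.add_sub_cancel]
      rw [one_div_mul_eq_div]
  have h2 : ∑ S ∈ Finset.univ.filter (fun S : Finset (Fin d) => i ∉ S),
      ν S / ((d:ℝ) * ((d-1).choose S.card : ℕ))
      = -∑ S ∈ Finset.univ.filter (fun S : Finset (Fin d) => i ∉ S),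
        coefSV d i S * ν S := by
    rw [← Finset.sum_neg_distrib]
    apply Finset.sum_congr rfl
    intro S hS
    simp only [Finset.mem_filter, Finset.mem_univ, true_and] at hS
    rw [coefSV, if_neg hS]
    ring
  rw [h1, h2]
  ring
lemma key_nat1 (d s : ℕ) (hs1 : 1 ≤ s) (hs2 : s ≤ d - 1) :
    (d-1).choose s * s = (d-1).choose (s-1) * (d - s) := by
  have := Nat.choose_succ_right_eq (d-1) (s-1)
  have e1 : s - 1 + 1 = s := by omega
  have e2 : d - 1 - (s - 1) = d - s := by omega
  rwa [e1, e2] at this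

lemma key_nat2 (d s : ℕ) (hd : 2 ≤ d) (hs1 : 1 ≤ s) :
    (d - 1) * (d-2).choose (s-1) = (d-1).choose s * s := by
  have := Nat.add_one_mul_choose_eq (d-2) (s-1)
  have e1 : d - 2 + 1 = d - 1 := by omega
  have e2 : s - 1 + 1 = s := by omega
  rwa [e1, e2] at this

lemma key_arith (d s : ℕ) (hd : 2 ≤ d) (hs1 : 1 ≤ s) (hs2 : s ≤ d - 1) :
    1 / ((d:ℝ) * ((d-1).choose (s-1) : ℕ)) + 1 / ((d:ℝ) * ((d-1).choose s : ℕ))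
      = 1 / (((d:ℝ) - 1) * ((d-2).choose (s-1) : ℕ)) := by
  have h1 := key_nat1 d s hs1 hs2
  have h2 := key_nat2 d s hd hs1
  have pa : 0 < (d-1).choose (s-1) := Nat.choose_pos (by omega)
  have pb : 0 < (d-1).choose s := Nat.choose_pos (by omega)
  have pc : 0 < (d-2).choose (s-1) := Nat.choose_pos (by omega)
  have hd0 : (0:ℝ) < d := by positivity
  have hd1 : (0:ℝ) < (d:ℝ) - 1 := by
    have : (2:ℝ) ≤ d := by exact_mod_cast hd
    linarith
  have ha : (0:ℝ) < ((d-1).choose (s-1) : ℕ) := by exact_mod_cast pa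
  have hb : (0:ℝ) < ((d-1).choose s : ℕ) := by exact_mod_cast pb
  have hc : (0:ℝ) < ((d-2).choose (s-1) : ℕ) := by exact_mod_cast pc
  have h1' : ((d-1).choose s : ℝ) * s = ((d-1).choose (s-1) : ℝ) * ((d:ℝ) - s) := by
    have := congrArg (Nat.cast : ℕ → ℝ) h1
    push_cast at this
    rw [Nat.cast_sub (by omega : s ≤ d)] at this
    push_cast at this
    linarith [this]
  have h2' : ((d:ℝ) - 1) * ((d-2).choose (s-1) : ℝ) = ((d-1).choose s : ℝ) * s := by
    have := congrArg (Nat.cast : ℕ → ℝ) h2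
    rw [Nat.cast_mul, Nat.cast_sub (by omega : 1 ≤ d)] at this
    push_cast at this
    linarith [this]
  have hs0 : (0:ℝ) < (s:ℝ) := by exact_mod_cast hs1
  rw [div_add_div _ _ (by positivity) (by positivity), div_eq_div_iff (by positivity) (by positivity)]
  linear_combination ((d:ℝ) * ((d-1).choose s : ℕ) + (d:ℝ) * ((d-1).choose (s-1) : ℕ)) * h2' + ((d:ℝ) * ((d-1).choose s : ℕ)) * h1'

lemma coef_sub (d : ℕ) (hd : 2 ≤ d) (i j : Fin d) (S : Finset (Fin d)) :
    coefSV d i S - coefSV d j S =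
      ((if i ∈ S then (1:ℝ) else 0) - (if j ∈ S then (1:ℝ) else 0))
        * (shapleyWeight d S / ((d:ℝ) - 1)) := by
  have hcard : ∀ (k : Fin d), k ∈ S → ∀ (l : Fin d), l ∉ S →
      1 ≤ S.card ∧ S.card ≤ d - 1 := by
    intro k hk l hl
    constructor
    · exact Finset.card_pos.mpr ⟨k, hk⟩
    · have : S ⊂ Finset.univ := Finset.ssubset_univ_iff.mpr (fun h => hl (h ▸ Finset.mem_univ l))
      have := Finset.card_lt_card this
      simp only [Finset.card_univ, Fintype.card_fin] at this
      omega
  have main : ∀ (k l : Fin d), k ∈ S → l ∉ S →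
      coefSV d k S - coefSV d l S = shapleyWeight d S / ((d:ℝ) - 1) := by
    intro k l hk hl
    obtain ⟨hs1, hs2⟩ := hcard k hk l hl
    rw [coefSV, coefSV, if_pos hk, if_neg hl, sub_neg_eq_add, key_arith d S.card hd hs1 hs2,
      shapleyWeight, if_pos ⟨hs1, by omega⟩, div_div, mul_comm]
  by_cases hi : i ∈ S <;> by_cases hj : j ∈ S
  · simp [coefSV, hi, hj]
  · rw [if_pos hi, if_neg hj, main i j hi hj]; ring
  · rw [if_neg hi, if_pos hj]
    have := main j i hj hi
    have e : coefSV d i S - coefSV d j S = -(coefSV d j S - coefSV d i S) := by ring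
    rw [e, this]; ring
  · simp [coefSV, hi, hj]

lemma filter_mem_eq (d : ℕ) (S : Finset (Fin d)) :
    Finset.univ.filter (fun i => i ∈ S) = S := by
  ext x; simp

lemma coef_col_sum (d : ℕ) (hd : 1 ≤ d) (S : Finset (Fin d)) :
    ∑ i, coefSV d i S
      = (if S = Finset.univ then (1:ℝ) else 0) - (if S = ∅ then (1:ℝ) else 0) := by
  rw [← Finset.sum_filter_add_sum_filter_not Finset.univ (fun i : Fin d => i ∈ S)
    (fun i => coefSV d i S)]
  have e1 : ∑ i ∈ Finset.univ.filter (fun i : Fin d => i ∈ S), coefSV d i S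
      = S.card * (1 / ((d : ℝ) * ((d - 1).choose (S.card - 1) : ℕ))) := by
    rw [Finset.sum_congr rfl (fun i hi => by
      rw [coefSV, if_pos (Finset.mem_filter.mp hi).2]), Finset.sum_const,
      filter_mem_eq, nsmul_eq_mul]
  have e2 : ∑ i ∈ Finset.univ.filter (fun i : Fin d => i ∉ S), coefSV d i S
      = ((d : ℝ) - S.card) * (-(1 / ((d : ℝ) * ((d - 1).choose S.card : ℕ)))) := by
    rw [Finset.sum_congr rfl (fun i hi => by
      rw [coefSV, if_neg (Finset.mem_filter.mp hi).2]), Finset.sum_const, nsmul_eq_mul]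
    congr 1
    rw [Finset.filter_not, Finset.card_sdiff_of_subset (Finset.filter_subset _ _), filter_mem_eq]
    have hle : S.card ≤ d := by
      have := Finset.card_le_card (Finset.subset_univ S)
      simpa [Finset.card_univ] using this
    rw [Nat.cast_sub (by simpa [Finset.card_univ] using hle)]
    simp [Finset.card_univ]
  rw [e1, e2]
  by_cases h0 : S = ∅
  · subst h0
    have : ¬ ((∅ : Finset (Fin d)) = Finset.univ) := by
      intro h
      have := congrArg Finset.card h
      simp [Finset.card_univ] at this
      omega
    rw [if_neg this, if_pos rfl]
    have hd0 : (d:ℝ) ≠ 0 := by positivity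
    simp [Nat.choose_zero_right]
    field_simp
  by_cases h1 : S = Finset.univ
  · subst h1
    rw [if_pos rfl, if_neg h0]
    have hcard : (Finset.univ : Finset (Fin d)).card = d := by simp [Finset.card_univ]
    rw [hcard]
    have : (d-1).choose (d - 1) = 1 := Nat.choose_self _
    rw [this]
    have hd0 : (d:ℝ) ≠ 0 := by positivity
    simp
    field_simp
  · rw [if_neg h1, if_neg h0]
    have hs1 : 1 ≤ S.card := Finset.card_pos.mpr (Finset.nonempty_of_ne_empty h0)
    have hs2 : S.card ≤ d - 1 := by
      have : S ⊂ Finset.univ := Finset.ssubset_univ_iff.mpr h1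
      have := Finset.card_lt_card this
      simp only [Finset.card_univ, Fintype.card_fin] at this
      omega
    have h1' := key_nat1 d S.card hs1 hs2
    have pa : 0 < (d-1).choose (S.card-1) := Nat.choose_pos (by omega)
    have pb : 0 < (d-1).choose S.card := Nat.choose_pos (by omega)
    have ha : (0:ℝ) < ((d-1).choose (S.card-1) : ℕ) := by exact_mod_cast pa
    have hb : (0:ℝ) < ((d-1).choose S.card : ℕ) := by exact_mod_cast pb
    have hd0 : (0:ℝ) < d := by positivity
    have hcast : ((d-1).choose S.card : ℝ) * S.card
        = ((d-1).choose (S.card-1) : ℝ) * ((d:ℝ) - S.card) := by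
      have := congrArg (Nat.cast : ℕ → ℝ) h1'
      rw [Nat.cast_mul, Nat.cast_mul, Nat.cast_sub (by omega : S.card ≤ d)] at this
      exact this
    have hane : ((d-1).choose (S.card-1) : ℝ) ≠ 0 := ne_of_gt ha
    have hbne : ((d-1).choose S.card : ℝ) ≠ 0 := ne_of_gt hb
    have hdne : (d:ℝ) ≠ 0 := ne_of_gt hd0
    field_simp
    linear_combination hcast

lemma shapley_eff (d : ℕ) (hd : 1 ≤ d) (ν : Finset (Fin d) → ℝ) :
    ∑ i, shapley d ν i = ν Finset.univ - ν ∅ := by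
  simp_rw [shapley_eq_sum_coef]
  rw [Finset.sum_comm]
  have : ∀ S ∈ (Finset.univ : Finset (Finset (Fin d))),
      ∑ i, coefSV d i S * ν S
        = (if S = Finset.univ then ν S else 0) - (if S = ∅ then ν S else 0) := by
    intro S _
    rw [← Finset.sum_mul, coef_col_sum d hd S]
    have hne : (Finset.univ : Finset (Fin d)) ≠ ∅ := by
      have : (⟨0, hd⟩ : Fin d) ∈ (Finset.univ : Finset (Fin d)) := Finset.mem_univ _
      exact Finset.ne_empty_of_mem this
    by_cases h1 : S = Finset.univ <;> by_cases h0 : S = ∅ <;> simp [h1, h0, hne, Ne.symm hne]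
  rw [Finset.sum_congr rfl this, Finset.sum_sub_distrib]
  rw [Finset.sum_ite_eq' Finset.univ (Finset.univ : Finset (Fin d)) ν,
    Finset.sum_ite_eq' Finset.univ (∅ : Finset (Fin d)) ν]
  simp

lemma shapley_perm (d : ℕ) (ν : Finset (Fin d) → ℝ) (σ : Equiv.Perm (Fin d)) (i : Fin d) :
    shapley d (fun S => ν (S.image σ)) i = shapley d ν (σ i) := by
  rw [shapley_eq_sum_coef, shapley_eq_sum_coef]
  apply Fintype.sum_equiv (Equiv.finsetCongr σ)
  intro S
  have him : (Equiv.finsetCongr σ) S = S.image σ := by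
    simp [Equiv.finsetCongr, Finset.map_eq_image]
  rw [him]
  congr 1
  rw [coefSV, coefSV]
  have hmem : σ i ∈ S.image σ ↔ i ∈ S := by
    constructor
    · intro h
      obtain ⟨x, hx, he⟩ := Finset.mem_image.mp h
      rwa [← σ.injective he]
    · intro h; exact Finset.mem_image_of_mem σ h
  have hcard : (S.image σ).card = S.card := Finset.card_image_of_injective S σ.injective
  rw [hcard]
  by_cases h : i ∈ S
  · rw [if_pos h, if_pos (hmem.mpr h)]
  · rw [if_neg h, if_neg (fun hh => h (hmem.mp hh))]

/-- unanimity game -/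
noncomputable def unanim (d : ℕ) (T : Finset (Fin d)) (S : Finset (Fin d)) : ℝ :=
  if T ⊆ S then 1 else 0

lemma shapley_unanim_not_mem (d : ℕ) (T : Finset (Fin d)) (i : Fin d) (hi : i ∉ T) :
    shapley d (unanim d T) i = 0 := by
  rw [shapley]
  have : ∀ S ∈ ((Finset.univ : Finset (Fin d)).erase i).powerset,
      (unanim d T (insert i S) - unanim d T S) / ((d - 1).choose S.card : ℝ) = 0 := by
    intro S _
    have : (T ⊆ insert i S) ↔ T ⊆ S := by
      constructor
      · intro h x hx
        rcases Finset.mem_insert.mp (h hx) with h1 | h1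
        · exact absurd (h1 ▸ hx) hi
        · exact h1
      · intro h; exact h.trans (Finset.subset_insert i S)
    rw [unanim, unanim]
    by_cases h : T ⊆ S <;> simp [h, this.mpr, this]
  rw [Finset.sum_congr rfl this]
  simp

lemma shapley_unanim (d : ℕ) (hd : 1 ≤ d) (T : Finset (Fin d)) (hT : T.Nonempty) (i : Fin d) :
    shapley d (unanim d T) i = if i ∈ T then 1 / (T.card : ℝ) else 0 := by
  by_cases hi : i ∈ T
  · rw [if_pos hi]
    -- symmetry: all players in T get the same value
    have hsym : ∀ j ∈ T, shapley d (unanim d T) j = shapley d (unanim d T) i := by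
      intro j hj
      have key := shapley_perm d (unanim d T) (Equiv.swap i j) i
      rw [Equiv.swap_apply_left] at key
      have hfix : (fun S => unanim d T (S.image (Equiv.swap i j))) = unanim d T := by
        funext S
        rw [unanim, unanim]
        have hTfix : T.image (Equiv.swap i j) = T := by
          ext x
          simp only [Finset.mem_image]
          have hswap : ∀ y, y ∈ T → Equiv.swap i j y ∈ T := by
            intro y hy
            rcases eq_or_ne y i with rfl | h1
            · rwa [Equiv.swap_apply_left]
            rcases eq_or_ne y j with rfl | h2
            · rwa [Equiv.swap_apply_right]
            · rwa [Equiv.swap_apply_of_ne_of_ne h1 h2]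
          constructor
          · rintro ⟨y, hy, rfl⟩
            exact hswap y hy
          · intro hx
            exact ⟨Equiv.swap i j x, hswap x hx, Equiv.swap_apply_self i j x⟩
        have : T ⊆ S.image (Equiv.swap i j) ↔ T ⊆ S := by
          conv_lhs => rw [← hTfix]
          exact Finset.image_subset_image_iff (Equiv.swap i j).injective
        by_cases h : T ⊆ S <;> simp [h, this]
      rw [hfix] at key
      exact key.symm
    have heff := shapley_eff d hd (unanim d T)
    have hu1 : unanim d T Finset.univ = 1 := if_pos (Finset.subset_univ T)
    have hu0 : unanim d T ∅ = 0 := by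
      rw [unanim, if_neg]
      intro h
      exact hT.ne_empty (Finset.subset_empty.mp h)
    rw [hu1, hu0, sub_zero] at heff
    rw [← Finset.sum_filter_add_sum_filter_not Finset.univ (fun j : Fin d => j ∈ T)
      (fun j => shapley d (unanim d T) j)] at heff
    have hz : ∑ j ∈ Finset.univ.filter (fun j : Fin d => j ∉ T),
        shapley d (unanim d T) j = 0 := by
      apply Finset.sum_eq_zero
      intro j hj
      exact shapley_unanim_not_mem d T j (Finset.mem_filter.mp hj).2
    have hTsum : ∑ j ∈ Finset.univ.filter (fun j : Fin d => j ∈ T),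
        shapley d (unanim d T) j = (T.card : ℝ) * shapley d (unanim d T) i := by
      rw [Finset.sum_congr rfl (fun j hj => hsym j (Finset.mem_filter.mp hj).2),
        Finset.sum_const, filter_mem_eq, nsmul_eq_mul]
    rw [hz, hTsum, add_zero] at heff
    have hc0 : (T.card : ℝ) ≠ 0 := by
      have := Finset.card_pos.mpr hT
      positivity
    field_simp at heff ⊢
    linarith
  · rw [if_neg hi]; exact shapley_unanim_not_mem d T i hi

lemma shapley_add (d : ℕ) (f g : Finset (Fin d) → ℝ) (i : Fin d) :
    shapley d (fun S => f S + g S) i = shapley d f i + shapley d g i := by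
  simp_rw [shapley_eq_sum_coef, ← Finset.sum_add_distrib]
  exact Finset.sum_congr rfl fun S _ => by ring

lemma shapley_finsum {ι : Type*} (d : ℕ) (A : Finset ι) (g : ι → Finset (Fin d) → ℝ)
    (i : Fin d) :
    shapley d (fun S => ∑ T ∈ A, g T S) i = ∑ T ∈ A, shapley d (g T) i := by
  simp_rw [shapley_eq_sum_coef, Finset.mul_sum]
  rw [Finset.sum_comm]

lemma shapley_smul (d : ℕ) (a : ℝ) (f : Finset (Fin d) → ℝ) (i : Fin d) :
    shapley d (fun S => a * f S) i = a * shapley d f i := by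
  simp_rw [shapley_eq_sum_coef, Finset.mul_sum]
  exact Finset.sum_congr rfl fun S _ => by ring

/-- PolySHAP consistency: the Shapley values of `ν` are recovered from any minimizer of the
PolySHAP objective over the index set `D ∪ I` subject to the efficiency constraint. -/
theorem polyshap_consistency
    (d : ℕ) (hd : 2 ≤ d)
    (ν : Finset (Fin d) → ℝ) (hν0 : ν ∅ = 0)
    (I : Finset (Finset (Fin d))) (hI : ∀ T ∈ I, 2 ≤ T.card)
    (idx : Finset (Finset (Fin d)))
    (hidx : idx = (Finset.univ : Finset (Fin d)).image (fun i => ({i} : Finset (Fin d))) ∪ I)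
    (φ : Finset (Fin d) → ℝ)
    (hconstr : ∑ T ∈ idx, φ T = ν Finset.univ)
    (hmin : ∀ ψ : Finset (Fin d) → ℝ, (∑ T ∈ idx, ψ T = ν Finset.univ) →
      (∑ S : Finset (Fin d), shapleyWeight d S *
          (ν S - ∑ T ∈ idx.filter (fun T => T ⊆ S), φ T) ^ 2) ≤
        (∑ S : Finset (Fin d), shapleyWeight d S *
          (ν S - ∑ T ∈ idx.filter (fun T => T ⊆ S), ψ T) ^ 2)) :
    ∀ i : Fin d,
      shapley d ν i = φ {i} + ∑ S ∈ I.filter (fun S => i ∈ S), φ S / (S.card : ℝ) := by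
  have hd1 : 1 ≤ d := by omega
  set νhat : Finset (Fin d) → ℝ := fun S => ∑ T ∈ idx.filter (fun T => T ⊆ S), φ T
    with hνhat
  set r : Finset (Fin d) → ℝ := fun S => ν S - νhat S with hrdef
  have hsing : ∀ j : Fin d, ({j} : Finset (Fin d)) ∈ idx := by
    intro j
    rw [hidx]
    exact Finset.mem_union_left _ (Finset.mem_image_of_mem _ (Finset.mem_univ j))
  have hne_idx : ∀ T ∈ idx, T.Nonempty := by
    intro T hT
    rw [hidx] at hT
    rcases Finset.mem_union.mp hT with h | h
    · obtain ⟨j, _, rfl⟩ := Finset.mem_image.mp h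
      exact Finset.singleton_nonempty j
    · have := hI T h
      exact Finset.card_pos.mp (by omega)
  have hr_univ : r Finset.univ = 0 := by
    have : idx.filter (fun T => T ⊆ Finset.univ) = idx :=
      Finset.filter_true_of_mem (fun T _ => Finset.subset_univ T)
    simp only [hrdef, hνhat, this, hconstr, sub_self]
  have hr_empty : r ∅ = 0 := by
    have : idx.filter (fun T => T ⊆ (∅ : Finset (Fin d))) = ∅ := by
      apply Finset.filter_false_of_mem
      intro T hT h
      exact (hne_idx T hT).ne_empty (Finset.subset_empty.mp h)
    simp only [hrdef, hνhat, this, Finset.sum_empty, hν0, sub_zero]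
  -- orthogonality
  have orth : ∀ δ : Finset (Fin d) → ℝ, (∑ T ∈ idx, δ T = 0) →
      ∑ S : Finset (Fin d), shapleyWeight d S * r S *
        (∑ T ∈ idx.filter (fun T => T ⊆ S), δ T) = 0 := by
    intro δ hδ
    set g : Finset (Fin d) → ℝ := fun S => ∑ T ∈ idx.filter (fun T => T ⊆ S), δ T with hg
    set P : ℝ := ∑ S : Finset (Fin d), shapleyWeight d S * r S * g S with hP
    set Q : ℝ := ∑ S : Finset (Fin d), shapleyWeight d S * g S ^ 2 with hQ
    have hwnn : ∀ S : Finset (Fin d), 0 ≤ shapleyWeight d S := by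
      intro S
      rw [shapleyWeight]
      split
      · positivity
      · exact le_refl 0
    have hQnn : 0 ≤ Q := Finset.sum_nonneg fun S _ => mul_nonneg (hwnn S) (sq_nonneg _)
    have key : ∀ t : ℝ, 0 ≤ -2 * t * P + t ^ 2 * Q := by
      intro t
      have hfeas : ∑ T ∈ idx, (φ T + t * δ T) = ν Finset.univ := by
        rw [Finset.sum_add_distrib, hconstr, ← Finset.mul_sum, hδ, mul_zero, add_zero]
      have hm := hmin (fun T => φ T + t * δ T) hfeas
      have hexp : ∀ S : Finset (Fin d),
          shapleyWeight d S * (ν S - ∑ T ∈ idx.filter (fun T => T ⊆ S), (φ T + t * δ T)) ^ 2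
          = shapleyWeight d S * (ν S - ∑ T ∈ idx.filter (fun T => T ⊆ S), φ T) ^ 2
            - 2 * t * (shapleyWeight d S * r S * g S)
            + t ^ 2 * (shapleyWeight d S * g S ^ 2) := by
        intro S
        rw [Finset.sum_add_distrib, ← Finset.mul_sum,
          show r S = ν S - ∑ T ∈ idx.filter (fun T => T ⊆ S), φ T from rfl,
          show g S = ∑ T ∈ idx.filter (fun T => T ⊆ S), δ T from rfl]
        ring
      rw [Finset.sum_congr rfl (fun S _ => hexp S)] at hm
      rw [Finset.sum_add_distrib, Finset.sum_sub_distrib, ← Finset.mul_sum,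
        ← Finset.mul_sum, ← hP, ← hQ] at hm
      linarith
    -- conclude P = 0
    have hQ1 : (0:ℝ) < Q + 1 := by linarith
    have ht := key (P / (Q + 1))
    have hident : -2 * (P / (Q + 1)) * P + (P / (Q + 1)) ^ 2 * Q
        = -(P ^ 2 * (Q + 2)) / (Q + 1) ^ 2 := by
      field_simp
      ring
    rw [hident] at ht
    have h2 : (0:ℝ) < (Q + 1) ^ 2 := by positivity
    have h3 : 0 ≤ -(P ^ 2 * (Q + 2)) := by
      have := mul_nonneg ht h2.le
      rwa [div_mul_cancel₀ _ (ne_of_gt h2)] at this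
    have h4 : P ^ 2 = 0 := by nlinarith [sq_nonneg P]
    exact pow_eq_zero_iff (by norm_num : (2:ℕ) ≠ 0) |>.mp h4
  -- B-equality
  have hB : ∀ i j : Fin d,
      (∑ S : Finset (Fin d), if i ∈ S then shapleyWeight d S * r S else 0)
        = ∑ S : Finset (Fin d), if j ∈ S then shapleyWeight d S * r S else 0 := by
    intro i j
    rcases eq_or_ne i j with rfl | hij
    · rfl
    set δ : Finset (Fin d) → ℝ :=
      fun T => (if T = {i} then 1 else 0) - (if T = {j} then 1 else 0) with hδdef
    have hδsum : ∑ T ∈ idx, δ T = 0 := by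
      rw [hδdef, Finset.sum_sub_distrib, Finset.sum_ite_eq' idx ({i} : Finset (Fin d)),
        Finset.sum_ite_eq' idx ({j} : Finset (Fin d))]
      rw [if_pos (hsing i), if_pos (hsing j), sub_self]
    have horth := orth δ hδsum
    have hgval : ∀ S : Finset (Fin d), ∑ T ∈ idx.filter (fun T => T ⊆ S), δ T
        = (if i ∈ S then (1:ℝ) else 0) - (if j ∈ S then (1:ℝ) else 0) := by
      intro S
      rw [hδdef, Finset.sum_sub_distrib,
        Finset.sum_ite_eq' (idx.filter (fun T => T ⊆ S)) ({i} : Finset (Fin d)),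
        Finset.sum_ite_eq' (idx.filter (fun T => T ⊆ S)) ({j} : Finset (Fin d))]
      congr 1 <;> · simp [Finset.mem_filter, hsing, Finset.singleton_subset_iff]
    rw [Finset.sum_congr rfl (fun S _ => by rw [hgval S])] at horth
    have hsplit : ∀ S : Finset (Fin d),
        shapleyWeight d S * r S * ((if i ∈ S then (1:ℝ) else 0) - (if j ∈ S then (1:ℝ) else 0))
        = (if i ∈ S then shapleyWeight d S * r S else 0)
          - (if j ∈ S then shapleyWeight d S * r S else 0) := by
      intro S
      by_cases hi : i ∈ S <;> by_cases hj : j ∈ S <;> simp [hi, hj] <;> ring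
    rw [Finset.sum_congr rfl (fun S _ => hsplit S), Finset.sum_sub_distrib,
      sub_eq_zero] at horth
    exact horth
  -- shapley of r is constant, hence 0
  have hreq : ∀ i j : Fin d, shapley d r i = shapley d r j := by
    intro i j
    rw [shapley_eq_sum_coef, shapley_eq_sum_coef, ← sub_eq_zero, ← Finset.sum_sub_distrib]
    have hper : ∀ S : Finset (Fin d),
        coefSV d i S * r S - coefSV d j S * r S
        = (1 / ((d:ℝ) - 1)) * ((if i ∈ S then shapleyWeight d S * r S else 0)
            - (if j ∈ S then shapleyWeight d S * r S else 0)) := by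
      intro S
      rw [← sub_mul, coef_sub d hd i j S]
      by_cases hi : i ∈ S <;> by_cases hj : j ∈ S <;> simp [hi, hj] <;> ring
    rw [Finset.sum_congr rfl (fun S _ => hper S), ← Finset.mul_sum,
      Finset.sum_sub_distrib, hB i j, sub_self, mul_zero]
  have hr0 : ∀ i : Fin d, shapley d r i = 0 := by
    intro i
    have heff := shapley_eff d hd1 r
    rw [hr_univ, hr_empty, sub_zero] at heff
    have hconst : ∑ j : Fin d, shapley d r j = (d:ℝ) * shapley d r i := by
      rw [Finset.sum_congr rfl (fun j _ => hreq j i), Finset.sum_const, nsmul_eq_mul]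
      simp [Finset.card_univ]
    rw [hconst] at heff
    have hd0 : (d:ℝ) ≠ 0 := by positivity
    exact (mul_eq_zero.mp heff).resolve_left hd0
  -- shapley of νhat
  intro i
  have hdecomp : shapley d ν i = shapley d νhat i := by
    have : ν = fun S => νhat S + r S := funext fun S => by simp [hrdef]
    rw [show shapley d ν i = shapley d (fun S => νhat S + r S) i from by rw [← this],
      shapley_add, hr0 i, add_zero]
  have hhat_eq : νhat = fun S => ∑ T ∈ idx, φ T * unanim d T S := by
    funext S
    show ∑ T ∈ idx.filter (fun T => T ⊆ S), φ T = ∑ T ∈ idx, φ T * unanim d T S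
    rw [Finset.sum_filter]
    exact Finset.sum_congr rfl fun T _ => by rw [unanim]; by_cases h : T ⊆ S <;> simp [h]
  have hhat : shapley d νhat i = ∑ T ∈ idx, φ T * (if i ∈ T then 1 / (T.card : ℝ) else 0) := by
    rw [hhat_eq, shapley_finsum]
    apply Finset.sum_congr rfl
    intro T hT
    rw [shapley_smul, shapley_unanim d hd1 T (hne_idx T hT)]
  rw [hdecomp, hhat]
  -- split the index set
  have hdisj : Disjoint ((Finset.univ : Finset (Fin d)).image
      (fun i => ({i} : Finset (Fin d)))) I := by
    rw [Finset.disjoint_left]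
    intro T hTA hTI
    obtain ⟨j, _, rfl⟩ := Finset.mem_image.mp hTA
    have := hI _ hTI
    simp at this
  rw [hidx, Finset.sum_union hdisj]
  congr 1
  · rw [Finset.sum_image (fun a _ b _ h => Finset.singleton_injective h)]
    have : ∀ j : Fin d, φ {j} * (if i ∈ ({j} : Finset (Fin d)) then
        1 / (({j} : Finset (Fin d)).card : ℝ) else 0)
        = if j = i then φ {j} else 0 := by
      intro j
      rcases eq_or_ne j i with rfl | h
      · simp
      · simp [Finset.mem_singleton, Ne.symm h, h]
    rw [Finset.sum_congr rfl (fun j _ => this j), Finset.sum_ite_eq' Finset.univ i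
      (fun j => φ {j})]
    simp
  · rw [Finset.sum_filter]
    apply Finset.sum_congr rfl
    intro S hS
    by_cases h : i ∈ S <;> simp [h] <;> ring
end

section
/- Let d ≥ 2 and let ν : 2^D → ℝ be a cooperative game on D = {1,…,d}. Given a paired weighted sample (S_1,w_1),…,(S_{2r},w_{2r}), let X̃_1 ∈ ℝ^{2r×d} and X̃_{≤2} ∈ ℝ^{2r×d_2} be the associated design matrices and ỹ ∈ ℝ^{2r} the target vector, and assume X̃_{≤2} has full column rank. Let φ̂¹ be the unique minimizer of ‖X̃_1 φ − ỹ‖₂² over {φ ∈ ℝ^d : ⟨φ,𝟙⟩ = ν(D)} and let φ̂² be the unique minimizer of ‖X̃_{≤2} φ − ỹ‖₂² over {φ ∈ ℝ^{d_2} : ⟨φ,𝟙⟩ = ν(D)}. Then φ̂¹ = M_{2→1} φ̂², i.e., the Shapley value estimates produced by paired KernelSHAP are exactly those extracted from paired 2-PolySHAP. -/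
open Finset Matrix

/-- Design matrix `X̃_{≤2}` of a weighted sample: rows indexed by samples `Fin r × Bool`,
columns indexed by nonempty subsets of size at most 2, entries `√(w_ℓ)·1[T ⊆ S_ℓ]`. -/
noncomputable def X2mat (d r : ℕ) (S : Fin r × Bool → Finset (Fin d))
    (w : Fin r × Bool → ℝ) :
    Matrix (Fin r × Bool) {T : Finset (Fin d) // T.Nonempty ∧ T.card ≤ 2} ℝ :=
  fun ℓ T => Real.sqrt (w ℓ) * (if (T : Finset (Fin d)) ⊆ S ℓ then 1 else 0)

/-- Design matrix `X̃_1` of a weighted sample: columns indexed by players,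
entries `√(w_ℓ)·1[i ∈ S_ℓ]`. -/
noncomputable def X1mat (d r : ℕ) (S : Fin r × Bool → Finset (Fin d))
    (w : Fin r × Bool → ℝ) :
    Matrix (Fin r × Bool) (Fin d) ℝ :=
  fun ℓ i => Real.sqrt (w ℓ) * (if i ∈ S ℓ then 1 else 0)

/-- Target vector `ỹ` with entries `√(w_ℓ)·ν(S_ℓ)`. -/
noncomputable def yvec (d r : ℕ) (ν : Finset (Fin d) → ℝ)
    (S : Fin r × Bool → Finset (Fin d)) (w : Fin r × Bool → ℝ) :
    Fin r × Bool → ℝ :=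
  fun ℓ => Real.sqrt (w ℓ) * ν (S ℓ)

/-- The matrix `M_{2→1}` mapping a 2-PolySHAP representation to Shapley values,
with entries `1[i ∈ T]/|T|`. -/
noncomputable def M21 (d : ℕ) :
    Matrix (Fin d) {T : Finset (Fin d) // T.Nonempty ∧ T.card ≤ 2} ℝ :=
  fun i T => (if i ∈ (T : Finset (Fin d)) then 1 else 0) / ((T : Finset (Fin d)).card : ℝ)

/-! ### Auxiliary lemmas -/

/-- Orthogonality condition from constrained minimality. -/
lemma ortho_of_min {n m : Type*} [Fintype n] [Fintype m]
    (X : Matrix n m ℝ) (y : n → ℝ) (c : ℝ) (φ : m → ℝ)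
    (hc : ∑ i, φ i = c)
    (hmin : ∀ ψ : m → ℝ, (∑ i, ψ i = c) →
      ∑ ℓ, (X.mulVec φ ℓ - y ℓ) ^ 2 ≤ ∑ ℓ, (X.mulVec ψ ℓ - y ℓ) ^ 2)
    (η : m → ℝ) (hη : ∑ i, η i = 0) :
    ∑ ℓ, (X.mulVec φ ℓ - y ℓ) * X.mulVec η ℓ = 0 := by
  set a := ∑ ℓ, (X.mulVec φ ℓ - y ℓ) * X.mulVec η ℓ with ha
  set b := ∑ ℓ, (X.mulVec η ℓ) ^ 2 with hb
  have hb0 : 0 ≤ b := Finset.sum_nonneg fun ℓ _ => sq_nonneg _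
  have key : ∀ t : ℝ, 0 ≤ 2 * t * a + t ^ 2 * b := by
    intro t
    have hcon : ∑ i, (φ + t • η) i = c := by
      simp only [Pi.add_apply, Pi.smul_apply, smul_eq_mul]
      rw [Finset.sum_add_distrib, ← Finset.mul_sum, hη, hc]; ring
    have h := hmin (φ + t • η) hcon
    have hmv : ∀ ℓ, X.mulVec (φ + t • η) ℓ = X.mulVec φ ℓ + t * X.mulVec η ℓ := by
      intro ℓ
      rw [Matrix.mulVec_add, Matrix.mulVec_smul]
      simp
    have hexp : ∑ ℓ, (X.mulVec (φ + t • η) ℓ - y ℓ) ^ 2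
        = ∑ ℓ, (X.mulVec φ ℓ - y ℓ) ^ 2 + (2 * t * a + t ^ 2 * b) := by
      rw [ha, hb, Finset.mul_sum, Finset.mul_sum, ← Finset.sum_add_distrib,
        ← Finset.sum_add_distrib]
      refine Finset.sum_congr rfl fun ℓ _ => ?_
      rw [hmv]; ring
    rw [hexp] at h
    linarith
  have hb1 : (0:ℝ) < b + 1 := by linarith
  have h1 := key (-a / (b + 1))
  have hval : 2 * (-a / (b + 1)) * a + (-a / (b + 1)) ^ 2 * b
      = (-(a ^ 2) * (b + 2)) / (b + 1) ^ 2 := by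
    field_simp
    ring
  rw [hval] at h1
  have hne : ((b + 1) ^ 2 : ℝ) ≠ 0 := by positivity
  have h2 : 0 ≤ -(a ^ 2) * (b + 2) := by
    have := mul_nonneg h1 (sq_nonneg (b + 1))
    rwa [div_mul_cancel₀ _ hne] at this
  have h3 : a ^ 2 ≤ 0 := by nlinarith
  have h4 : a ^ 2 = 0 := le_antisymm h3 (sq_nonneg a)
  exact pow_eq_zero_iff (by norm_num) |>.mp h4

/-- The singleton `{i}` as a column index for `X̃_{≤2}`. -/
def sgl {d : ℕ} (i : Fin d) : {T : Finset (Fin d) // T.Nonempty ∧ T.card ≤ 2} :=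
  ⟨{i}, ⟨i, Finset.mem_singleton_self i⟩, by simp⟩

lemma sgl_injective {d : ℕ} : Function.Injective (sgl (d := d)) := by
  intro a b h
  simpa [sgl, Finset.singleton_inj] using congrArg Subtype.val h

/-- Extension of a vector on players to a vector on columns, supported on singletons. -/
noncomputable def extv {d : ℕ} (v : Fin d → ℝ) :
    {T : Finset (Fin d) // T.Nonempty ∧ T.card ≤ 2} → ℝ :=
  fun T => ∑ i, if sgl i = T then v i else 0

lemma extv_apply_sgl {d : ℕ} (v : Fin d → ℝ) (i : Fin d) : extv v (sgl i) = v i := by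
  simp [extv, sgl_injective.eq_iff, Finset.sum_ite_eq']

lemma sum_extv {d : ℕ} (v : Fin d → ℝ) : ∑ T, extv v T = ∑ i, v i := by
  simp only [extv]
  rw [Finset.sum_comm]
  simp [Finset.sum_ite_eq]

lemma mulVec_extv {d r : ℕ} (S : Fin r × Bool → Finset (Fin d)) (w : Fin r × Bool → ℝ)
    (v : Fin d → ℝ) :
    (X2mat d r S w).mulVec (extv v) = (X1mat d r S w).mulVec v := by
  funext ℓ
  simp only [Matrix.mulVec, dotProduct, extv, Finset.mul_sum, mul_ite, mul_zero]
  rw [Finset.sum_comm]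
  refine Finset.sum_congr rfl fun i _ => ?_
  rw [Finset.sum_ite_eq]
  simp [X1mat, X2mat, sgl, Finset.singleton_subset_iff]

lemma X1_mul_M21_apply {d r : ℕ} (S : Fin r × Bool → Finset (Fin d)) (w : Fin r × Bool → ℝ)
    (ℓ : Fin r × Bool) (T : {T : Finset (Fin d) // T.Nonempty ∧ T.card ≤ 2}) :
    (X1mat d r S w * M21 d) ℓ T
      = Real.sqrt (w ℓ) * (((T : Finset (Fin d)) ∩ S ℓ).card : ℝ)
        / ((T : Finset (Fin d)).card : ℝ) := by
  rw [Matrix.mul_apply]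
  have h : ∀ i, X1mat d r S w ℓ i * M21 d i T
      = (Real.sqrt (w ℓ) / ((T : Finset (Fin d)).card : ℝ))
        * (if i ∈ (T : Finset (Fin d)) ∩ S ℓ then 1 else 0) := by
    intro i
    simp only [X1mat, M21, Finset.mem_inter]
    by_cases h1 : i ∈ (T : Finset (Fin d)) <;> by_cases h2 : i ∈ S ℓ <;>
      simp [h1, h2] <;> ring
  simp_rw [h, ← Finset.mul_sum]
  rw [Finset.sum_ite_mem, Finset.univ_inter, Finset.sum_const, nsmul_eq_mul, mul_one]
  ring

/-- Pair symmetry of the discrepancy `X̃_1 M_{2→1} - X̃_{≤2}`. -/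
lemma pair_symm {d r : ℕ} (S : Fin r × Bool → Finset (Fin d)) (w : Fin r × Bool → ℝ)
    (hpairS : ∀ j : Fin r, S (j, true) = (Finset.univ : Finset (Fin d)) \ S (j, false))
    (hpairw : ∀ j : Fin r, w (j, true) = w (j, false))
    (j : Fin r) (T : {T : Finset (Fin d) // T.Nonempty ∧ T.card ≤ 2}) :
    (X1mat d r S w * M21 d) (j, true) T - X2mat d r S w (j, true) T
      = (X1mat d r S w * M21 d) (j, false) T - X2mat d r S w (j, false) T := by
  rw [X1_mul_M21_apply, X1_mul_M21_apply]
  simp only [X2mat, hpairS, hpairw]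
  set Tf := (T : Finset (Fin d)) with hTf
  set A := S (j, false)
  have hdiff : Tf ∩ (Finset.univ \ A) = Tf \ A := by ext x; simp
  have hcard : (Tf ∩ A).card + (Tf \ A).card = Tf.card :=
    Finset.card_inter_add_card_sdiff Tf A
  have hsub1 : (Tf ⊆ Finset.univ \ A) ↔ (Tf ∩ A).card = 0 := by
    rw [Finset.card_eq_zero]
    constructor
    · intro hs
      ext x; simp only [Finset.mem_inter, Finset.notMem_empty, iff_false]
      rintro ⟨hx1, hx2⟩
      have := hs hx1
      simp at this
      exact this hx2
    · intro he x hx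
      simp only [Finset.mem_sdiff, Finset.mem_univ, true_and]
      intro hxA
      have : x ∈ Tf ∩ A := Finset.mem_inter.mpr ⟨hx, hxA⟩
      simp [he] at this
  have hsub2 : (Tf ⊆ A) ↔ (Tf ∩ A).card = Tf.card := by
    constructor
    · intro hs; rw [Finset.inter_eq_left.mpr hs]
    · intro he
      have := Finset.eq_of_subset_of_card_le (Finset.inter_subset_left (s₂ := A))
        (le_of_eq he.symm)
      rw [← this]; exact Finset.inter_subset_right
  rw [hdiff]
  simp only [hsub1, hsub2]
  obtain ⟨hne, hle⟩ := T.2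
  have hn1 : 1 ≤ Tf.card := Finset.card_pos.mpr hne
  have hkn : (Tf ∩ A).card ≤ Tf.card := Finset.card_le_card Finset.inter_subset_left
  set n := Tf.card
  set k := (Tf ∩ A).card
  have hsd : (Tf \ A).card = n - k := by omega
  rw [hsd]
  interval_cases n <;> interval_cases k <;> norm_num

/-- Pair antisymmetry of `X̃_1 η` for `η` summing to zero. -/
lemma pair_antisymm {d r : ℕ} (S : Fin r × Bool → Finset (Fin d)) (w : Fin r × Bool → ℝ)
    (hpairS : ∀ j : Fin r, S (j, true) = (Finset.univ : Finset (Fin d)) \ S (j, false))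
    (hpairw : ∀ j : Fin r, w (j, true) = w (j, false))
    (η : Fin d → ℝ) (hη : ∑ i, η i = 0) (j : Fin r) :
    (X1mat d r S w).mulVec η (j, true) = - (X1mat d r S w).mulVec η (j, false) := by
  simp only [Matrix.mulVec, dotProduct, X1mat, hpairS, hpairw]
  have h : ∀ i : Fin d,
      Real.sqrt (w (j, false)) * (if i ∈ Finset.univ \ S (j, false) then (1:ℝ) else 0) * η i
      = Real.sqrt (w (j, false)) * η i
        - Real.sqrt (w (j, false)) * (if i ∈ S (j, false) then (1:ℝ) else 0) * η i := by
    intro i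
    by_cases hi : i ∈ S (j, false) <;> simp [hi]
  simp_rw [h]
  rw [Finset.sum_sub_distrib, ← Finset.mul_sum, hη]
  ring

lemma sum_M21_col {d : ℕ} (T : {T : Finset (Fin d) // T.Nonempty ∧ T.card ≤ 2}) :
    ∑ i, M21 d i T = 1 := by
  simp only [M21]
  rw [← Finset.sum_div, Finset.sum_ite_mem, Finset.univ_inter, Finset.sum_const,
    nsmul_eq_mul, mul_one]
  have hpos : 0 < (T : Finset (Fin d)).card := Finset.card_pos.mpr T.2.1
  have : ((T : Finset (Fin d)).card : ℝ) ≠ 0 := Nat.cast_ne_zero.mpr hpos.ne'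
  exact div_self this

/-- Paired KernelSHAP is paired 2-PolySHAP. -/
theorem paired_kernelshap_eq_paired_two_polyshap
    (d r : ℕ) (hd : 2 ≤ d) (ν : Finset (Fin d) → ℝ)
    (S : Fin r × Bool → Finset (Fin d)) (w : Fin r × Bool → ℝ)
    (hw : ∀ ℓ, 0 < w ℓ)
    (hpairS : ∀ j : Fin r, S (j, true) = (Finset.univ : Finset (Fin d)) \ S (j, false))
    (hpairw : ∀ j : Fin r, w (j, true) = w (j, false))
    (hrank : LinearIndependent ℝ (X2mat d r S w).transpose)
    (φ1 : Fin d → ℝ) (hφ1c : ∑ i, φ1 i = ν Finset.univ)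
    (hφ1 : ∀ ψ : Fin d → ℝ, (∑ i, ψ i = ν Finset.univ) →
      ∑ ℓ, ((X1mat d r S w).mulVec φ1 ℓ - yvec d r ν S w ℓ) ^ 2 ≤
        ∑ ℓ, ((X1mat d r S w).mulVec ψ ℓ - yvec d r ν S w ℓ) ^ 2)
    (φ2 : {T : Finset (Fin d) // T.Nonempty ∧ T.card ≤ 2} → ℝ)
    (hφ2c : ∑ T, φ2 T = ν Finset.univ)
    (hφ2 : ∀ ψ : {T : Finset (Fin d) // T.Nonempty ∧ T.card ≤ 2} → ℝ,
      (∑ T, ψ T = ν Finset.univ) →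
      ∑ ℓ, ((X2mat d r S w).mulVec φ2 ℓ - yvec d r ν S w ℓ) ^ 2 ≤
        ∑ ℓ, ((X2mat d r S w).mulVec ψ ℓ - yvec d r ν S w ℓ) ^ 2) :
    φ1 = (M21 d).mulVec φ2 := by
  set X1 := X1mat d r S w with hX1
  set X2 := X2mat d r S w with hX2
  set y := yvec d r ν S w with hy
  set φ' := (M21 d).mulVec φ2 with hφ'
  -- φ' satisfies the constraint
  have hφ'c : ∑ i, φ' i = ν Finset.univ := by
    have : ∑ i, φ' i = ∑ T, φ2 T := by
      simp only [hφ', Matrix.mulVec, dotProduct]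
      rw [Finset.sum_comm]
      refine Finset.sum_congr rfl fun T _ => ?_
      rw [← Finset.sum_mul, sum_M21_col, one_mul]
    rw [this, hφ2c]
  -- orthogonality for φ1 and φ2
  have o1 : ∀ η : Fin d → ℝ, ∑ i, η i = 0 →
      ∑ ℓ, (X1.mulVec φ1 ℓ - y ℓ) * X1.mulVec η ℓ = 0 :=
    fun η hη => ortho_of_min X1 y (ν Finset.univ) φ1 hφ1c hφ1 η hη
  have o2 : ∀ η : {T : Finset (Fin d) // T.Nonempty ∧ T.card ≤ 2} → ℝ, ∑ T, η T = 0 →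
      ∑ ℓ, (X2.mulVec φ2 ℓ - y ℓ) * X2.mulVec η ℓ = 0 :=
    fun η hη => ortho_of_min X2 y (ν Finset.univ) φ2 hφ2c hφ2 η hη
  -- φ' also satisfies the first-problem orthogonality condition
  have o1' : ∀ η : Fin d → ℝ, ∑ i, η i = 0 →
      ∑ ℓ, (X1.mulVec φ' ℓ - y ℓ) * X1.mulVec η ℓ = 0 := by
    intro η hη
    have hmv : X1.mulVec φ' = (X1 * M21 d).mulVec φ2 := by
      rw [hφ', Matrix.mulVec_mulVec]
    rw [hmv]
    have split : ∑ ℓ, ((X1 * M21 d).mulVec φ2 ℓ - y ℓ) * X1.mulVec η ℓ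
        = ∑ ℓ, (X2.mulVec φ2 ℓ - y ℓ) * X1.mulVec η ℓ
          + ∑ ℓ, ((X1 * M21 d).mulVec φ2 ℓ - X2.mulVec φ2 ℓ) * X1.mulVec η ℓ := by
      rw [← Finset.sum_add_distrib]
      refine Finset.sum_congr rfl fun ℓ _ => ?_
      ring
    rw [split]
    have first : ∑ ℓ, (X2.mulVec φ2 ℓ - y ℓ) * X1.mulVec η ℓ = 0 := by
      rw [← mulVec_extv S w η]
      exact o2 (extv η) (by rw [sum_extv, hη])
    have hD : ∀ j : Fin r,
        (X1 * M21 d).mulVec φ2 (j, true) - X2.mulVec φ2 (j, true)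
          = (X1 * M21 d).mulVec φ2 (j, false) - X2.mulVec φ2 (j, false) := by
      intro j
      simp only [Matrix.mulVec, dotProduct]
      rw [← Finset.sum_sub_distrib, ← Finset.sum_sub_distrib]
      refine Finset.sum_congr rfl fun T _ => ?_
      have h := pair_symm S w hpairS hpairw j T
      rw [hX1, hX2]
      linear_combination φ2 T * h
    have second : ∑ ℓ, ((X1 * M21 d).mulVec φ2 ℓ - X2.mulVec φ2 ℓ) * X1.mulVec η ℓ = 0 := by
      rw [Fintype.sum_prod_type]
      refine Finset.sum_eq_zero fun j _ => ?_
      rw [Fintype.sum_bool, hD j, pair_antisymm S w hpairS hpairw η hη j]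
      ring
    rw [first, second, add_zero]
  -- difference vector
  set v := φ1 - φ' with hv
  have hvsum : ∑ i, v i = 0 := by
    simp only [hv, Pi.sub_apply]
    rw [Finset.sum_sub_distrib, hφ1c, hφ'c, sub_self]
  have hvmv : ∀ ℓ, X1.mulVec v ℓ = (X1.mulVec φ1 ℓ - y ℓ) - (X1.mulVec φ' ℓ - y ℓ) := by
    intro ℓ
    rw [hv, Matrix.mulVec_sub]
    simp
  have hdiff : ∑ ℓ, (X1.mulVec v ℓ) ^ 2 = 0 := by
    have step : ∑ ℓ, (X1.mulVec v ℓ) ^ 2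
        = ∑ ℓ, (X1.mulVec φ1 ℓ - y ℓ) * X1.mulVec v ℓ
          - ∑ ℓ, (X1.mulVec φ' ℓ - y ℓ) * X1.mulVec v ℓ := by
      rw [← Finset.sum_sub_distrib]
      refine Finset.sum_congr rfl fun ℓ _ => ?_
      rw [hvmv ℓ]
      ring
    rw [step, o1 v hvsum, o1' v hvsum, sub_self]
  have hzero : ∀ ℓ, X1.mulVec v ℓ = 0 := by
    intro ℓ
    have h0 := (Finset.sum_eq_zero_iff_of_nonneg (fun ℓ _ => sq_nonneg (X1.mulVec v ℓ))).mp
      hdiff ℓ (Finset.mem_univ ℓ)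
    exact pow_eq_zero_iff (by norm_num) |>.mp h0
  have hx2 : X2.mulVec (extv v) = 0 := by
    rw [hX2, mulVec_extv, ← hX1]
    funext ℓ
    exact hzero ℓ
  have hli : ∀ T, extv v T = 0 := by
    refine Fintype.linearIndependent_iff.mp hrank (extv v) ?_
    funext ℓ
    have hℓ := congrFun hx2 ℓ
    simpa [Finset.sum_apply, Matrix.transpose_apply, Matrix.mulVec, dotProduct,
      mul_comm] using hℓ
  funext i
  have h0 : extv v (sgl i) = 0 := hli (sgl i)
  rw [extv_apply_sgl] at h0
  have : φ1 i - φ' i = 0 := h0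
  linarith
end

section
/- Let d ≥ 2, let 1 ≤ k ≤ d, and let ν : 2^D → ℝ be a cooperative game on D = {1,…,d}. Suppose the vector I = (I_T)_{T ⊆ D, |T| ≤ k} minimizes the k_ADD-SHAP objective Σ_{S ⊆ D} μ(S)·(ν(S) − Σ_{T ⊆ D, |T| ≤ k} γ^{|T|}_{|S∩T|}·I_T)² subject to the constraint ν(D) − ν(∅) = Σ_{T ⊆ D, |T| ≤ k} (γ^{|T|}_{|T|} − γ^{|T|}_0)·I_T. Then for every player i ∈ D, I_{{i}} = φ_i^SV[ν], i.e., k_ADD-SHAP converges to the Shapley value. -/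
open Finset

/-- `γ^t_r = Σ_{ℓ=0}^r C(r,ℓ)·B_{t−ℓ}`, where `B` are the Bernoulli numbers with `B_1 = −1/2`. -/
noncomputable def gammaCoeff (t r : ℕ) : ℝ :=
  ∑ ℓ ∈ Finset.range (r + 1), (r.choose ℓ : ℝ) * ((bernoulli (t - ℓ) : ℚ) : ℝ)

lemma choose_pos_real {n k : ℕ} (h : k ≤ n) : (0:ℝ) < (n.choose k : ℝ) := by
  exact_mod_cast Nat.choose_pos h

/-- key binomial reciprocal identity -/
lemma sum_choose_div_choose : ∀ (N q r : ℕ), r ≤ q →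
    ∑ m ∈ Finset.range (N+1), ((N.choose m : ℝ) / ((N+q).choose (m+r) : ℝ))
      = ((N:ℝ)+q+1) / (((q:ℝ)+1) * (q.choose r : ℝ)) := by
  intro N
  induction N with
  | zero =>
    intro q r hr
    simp only [Finset.sum_range_one, Nat.choose_zero_right, Nat.cast_one, zero_add]
    have h1 : (0:ℝ) < (q.choose r : ℝ) := choose_pos_real hr
    field_simp
    simp
  | succ N ih =>
    intro q r hr
    have h1 := ih (q+1) r (by omega)
    have h2 := ih (q+1) (r+1) (by omega)
    rw [Finset.sum_range_succ'] at h1 ⊢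
    have key : ∑ m ∈ Finset.range (N+1), (((N+1).choose (m+1) : ℝ) / (((N+1)+q).choose ((m+1)+r) : ℝ))
        = ∑ m ∈ Finset.range (N+1), ((N.choose m : ℝ) / ((N+(q+1)).choose (m+(r+1)) : ℝ))
          + ∑ m ∈ Finset.range N, ((N.choose (m+1) : ℝ) / ((N+(q+1)).choose ((m+1)+r) : ℝ)) := by
      have ext2 : ∑ m ∈ Finset.range N, ((N.choose (m+1) : ℝ) / ((N+(q+1)).choose ((m+1)+r) : ℝ))
          = ∑ m ∈ Finset.range (N+1), ((N.choose (m+1) : ℝ) / ((N+(q+1)).choose ((m+1)+r) : ℝ)) := by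
        rw [Finset.sum_range_succ, Nat.choose_succ_self]
        simp
      rw [ext2, ← Finset.sum_add_distrib]
      refine Finset.sum_congr rfl fun m _ => ?_
      have hc : (N+1).choose (m+1) = N.choose m + N.choose (m+1) := Nat.choose_succ_succ N m
      have hd1 : (N+1)+q = N+(q+1) := by omega
      have hd2 : (m+1)+r = m+(r+1) := by omega
      rw [hc, hd1, hd2, Nat.cast_add, add_div]
    rw [key, h2]
    have h1' : ∑ m ∈ Finset.range N, ((N.choose (m+1) : ℝ) / ((N+(q+1)).choose ((m+1)+r) : ℝ))
        = (↑N + ↑(q + 1) + 1) / ((↑(q + 1) + 1) * ↑((q + 1).choose r))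
          - (N.choose 0 : ℝ) / ((N+(q+1)).choose (0+r) : ℝ) := by
      linarith [h1]
    rw [h1']
    have hden : ((N+1)+q).choose (0+r) = (N+(q+1)).choose (0+r) := by congr 1; omega
    rw [hden]
    have e1 : (0:ℝ) < ((q+1).choose r : ℝ) := choose_pos_real (by omega)
    have e2 : (0:ℝ) < ((q+1).choose (r+1) : ℝ) := choose_pos_real (by omega)
    have e3 : (0:ℝ) < (q.choose r : ℝ) := choose_pos_real hr
    have i1 : ((q:ℝ)+1) * (q.choose r : ℝ) = ((q+1).choose (r+1) : ℝ) * ((r:ℝ)+1) := by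
      have h := Nat.add_one_mul_choose_eq q r
      have := congrArg (Nat.cast (R := ℝ)) h
      push_cast at this
      linarith [this]
    have i2 : ((q:ℝ)+1) * (q.choose r : ℝ) = ((q+1).choose r : ℝ) * ((q:ℝ)+1-r) := by
      have h := Nat.choose_succ_right_eq (q+1) r
      have := congrArg (Nat.cast (R := ℝ)) h
      push_cast [Nat.cast_sub (by omega : r ≤ q+1)] at this
      linarith [this, i1]
    set a := ((q+1).choose r : ℝ)
    set b := ((q+1).choose (r+1) : ℝ)
    set c := (q.choose r : ℝ)
    have hsum : 1/b + 1/a = ((q:ℝ)+2)/(((q:ℝ)+1)*c) := by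
      rw [div_add_div _ _ (by positivity) (by positivity),
        div_eq_div_iff (by positivity) (by positivity)]
      linear_combination a * i1 + b * i2
    have goal : ((↑N + ↑(q + 1) + 1) / ((↑(q + 1) + 1) * b))
        + ((↑N + ↑(q + 1) + 1) / ((↑(q + 1) + 1) * a))
        = ((N:ℝ) + 1 + ↑q + 1) / ((↑q + 1) * c) := by
      push_cast
      rw [div_add_div _ _ (by positivity) (by positivity),
        div_eq_div_iff (by positivity) (by positivity)]
      linear_combination (((N:ℝ)+q+2)*((q:ℝ)+2)*a) * i1 + (((N:ℝ)+q+2)*((q:ℝ)+2)*b) * i2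
    simp only [Nat.choose_zero_right, Nat.cast_one] at goal h2 ⊢
    push_cast at goal h2 ⊢
    linarith [goal]

lemma gammaCoeff_zero_zero : gammaCoeff 0 0 = 1 := by
  simp [gammaCoeff]

lemma gammaCoeff_one_zero : gammaCoeff 1 0 = -(1/2) := by
  simp [gammaCoeff, bernoulli_one]
  norm_num

lemma gammaCoeff_one_one : gammaCoeff 1 1 = 1/2 := by
  simp [gammaCoeff, Finset.sum_range_succ, bernoulli_one]
  norm_num

lemma gammaCoeff_succ_succ (q r : ℕ) :
    gammaCoeff (q+1) (r+1) = gammaCoeff q r + gammaCoeff (q+1) r := by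
  unfold gammaCoeff
  rw [Finset.sum_range_succ' (fun ℓ => ((r+1).choose ℓ : ℝ) * ((bernoulli (q+1 - ℓ) : ℚ) : ℝ)) (r+1)]
  have step : ∀ ℓ ∈ Finset.range (r+1),
      (((r+1).choose (ℓ+1) : ℝ) * ((bernoulli (q+1 - (ℓ+1)) : ℚ) : ℝ))
      = (r.choose ℓ : ℝ) * ((bernoulli (q - ℓ) : ℚ) : ℝ)
        + (r.choose (ℓ+1) : ℝ) * ((bernoulli (q - ℓ) : ℚ) : ℝ) := by
    intro ℓ _
    have h1 : (r+1).choose (ℓ+1) = r.choose ℓ + r.choose (ℓ+1) := Nat.choose_succ_succ r ℓ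
    have h2 : q + 1 - (ℓ+1) = q - ℓ := by omega
    rw [h1, h2, Nat.cast_add, add_mul]
  rw [Finset.sum_congr rfl step, Finset.sum_add_distrib]
  have hzero : ∑ ℓ ∈ Finset.range (r+1), (r.choose (ℓ+1) : ℝ) * ((bernoulli (q - ℓ) : ℚ) : ℝ)
      = ∑ ℓ ∈ Finset.range r, (r.choose (ℓ+1) : ℝ) * ((bernoulli (q - ℓ) : ℚ) : ℝ) := by
    rw [Finset.sum_range_succ, Nat.choose_succ_self]
    simp
  have h3 : ∑ ℓ ∈ Finset.range r, (r.choose (ℓ+1) : ℝ) * ((bernoulli (q - ℓ) : ℚ) : ℝ)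
        + ((r+1).choose 0 : ℝ) * ((bernoulli (q+1 - 0) : ℚ) : ℝ)
      = ∑ ℓ ∈ Finset.range (r+1), (r.choose ℓ : ℝ) * ((bernoulli (q+1 - ℓ) : ℚ) : ℝ) := by
    rw [Finset.sum_range_succ' (fun ℓ => (r.choose ℓ : ℝ) * ((bernoulli (q+1 - ℓ) : ℚ) : ℝ)) r]
    congr 1
    · refine Finset.sum_congr rfl fun ℓ hℓ => ?_
      have h4 : q + 1 - (ℓ+1) = q - ℓ := by omega
      rw [h4]
    · simp
  rw [add_assoc, hzero, h3]

lemma gammaCoeff_sum (q : ℕ) :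
    ∑ r ∈ Finset.range (q+1), gammaCoeff q r = if q = 0 then 1 else 0 := by
  unfold gammaCoeff
  -- extend inner sums to range (q+1), extra terms vanish since choose r ℓ = 0 for ℓ > r
  have h1 : ∀ r ∈ Finset.range (q+1),
      ∑ ℓ ∈ Finset.range (r+1), (r.choose ℓ : ℝ) * ((bernoulli (q - ℓ) : ℚ) : ℝ)
      = ∑ ℓ ∈ Finset.range (q+1), (r.choose ℓ : ℝ) * ((bernoulli (q - ℓ) : ℚ) : ℝ) := by
    intro r hr
    rw [Finset.mem_range] at hr
    refine Finset.sum_subset ?_ ?_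
    · intro x hx; rw [Finset.mem_range] at *; omega
    · intro x _ hx
      rw [Finset.mem_range, not_lt] at hx
      rw [Nat.choose_eq_zero_of_lt (by omega)]
      simp
  have h2 : ∀ r ∈ Finset.range (q+1),
      gammaCoeff q r = ∑ ℓ ∈ Finset.range (q+1), (r.choose ℓ : ℝ) * ((bernoulli (q - ℓ) : ℚ) : ℝ) := by
    intro r hr; rw [gammaCoeff, h1 r hr]
  rw [Finset.sum_congr rfl h1, Finset.sum_comm]
  have h5 : ∀ ℓ ∈ Finset.range (q+1),
      ∑ r ∈ Finset.range (q+1), (r.choose ℓ : ℝ) * ((bernoulli (q - ℓ) : ℚ) : ℝ)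
      = ((q+1).choose (ℓ+1) : ℝ) * ((bernoulli (q - ℓ) : ℚ) : ℝ) := by
    intro ℓ hℓ
    rw [Finset.mem_range] at hℓ
    rw [← Finset.sum_mul]
    congr 1
    have : ∑ r ∈ Finset.range (q+1), (r.choose ℓ : ℝ) = ((∑ r ∈ Finset.range (q+1), r.choose ℓ : ℕ) : ℝ) := by
      push_cast; ring
    rw [this]
    congr 1
    have hsub : ∑ r ∈ Finset.range (q+1), r.choose ℓ = ∑ r ∈ Finset.Icc ℓ q, r.choose ℓ := by
      symm
      refine Finset.sum_subset ?_ ?_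
      · intro x hx; rw [Finset.mem_Icc] at hx; rw [Finset.mem_range]; omega
      · intro x hx hx'
        rw [Finset.mem_range] at hx; rw [Finset.mem_Icc] at hx'
        exact Nat.choose_eq_zero_of_lt (by omega)
    rw [hsub, Nat.sum_Icc_choose]
  rw [Finset.sum_congr rfl h5]
  have h6 := Finset.sum_range_reflect
    (fun ℓ => ((q+1).choose (ℓ+1) : ℝ) * ((bernoulli (q - ℓ) : ℚ) : ℝ)) (q+1)
  rw [← h6]
  have h7 : ∀ j ∈ Finset.range (q+1),
      (((q+1).choose ((q+1-1-j)+1) : ℝ) * ((bernoulli (q - (q+1-1-j)) : ℚ) : ℝ))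
      = (((q+1).choose j : ℝ) * ((bernoulli j : ℚ) : ℝ)) := by
    intro j hj
    rw [Finset.mem_range] at hj
    have e1 : q + 1 - 1 - j = q - j := by omega
    have e2 : q - (q - j) = j := by omega
    have e3 : (q - j) + 1 = (q+1) - j := by omega
    rw [e1, e2, e3, Nat.choose_symm (by omega)]
  rw [Finset.sum_congr rfl h7]
  have h8 := sum_bernoulli (q+1)
  have h9 := congrArg (Rat.cast (K := ℝ)) h8
  push_cast at h9
  rw [h9]
  by_cases hq : q = 0 <;> simp [hq]

lemma sum_powerset_union_split {α : Type*} [DecidableEq α] (U W : Finset α)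
    (h : Disjoint U W) (F : Finset α → ℝ) :
    ∑ S ∈ (U ∪ W).powerset, F S = ∑ A ∈ U.powerset, ∑ B ∈ W.powerset, F (A ∪ B) := by
  rw [← Finset.sum_product']
  refine Finset.sum_nbij' (fun S => (S ∩ U, S ∩ W)) (fun p => p.1 ∪ p.2) ?_ ?_ ?_ ?_ ?_
  · intro S hS
    rw [Finset.mem_product, Finset.mem_powerset, Finset.mem_powerset]
    exact ⟨Finset.inter_subset_right, Finset.inter_subset_right⟩
  · intro p hp
    rw [Finset.mem_product, Finset.mem_powerset, Finset.mem_powerset] at hp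
    rw [Finset.mem_powerset]
    exact Finset.union_subset_union hp.1 hp.2
  · intro S hS
    rw [Finset.mem_powerset] at hS
    show S ∩ U ∪ S ∩ W = S
    rw [← Finset.inter_union_distrib_left]
    exact Finset.inter_eq_left.2 hS
  · intro p hp
    rw [Finset.mem_product, Finset.mem_powerset, Finset.mem_powerset] at hp
    have h1 : (p.1 ∪ p.2) ∩ U = p.1 := by
      rw [Finset.union_inter_distrib_right, Finset.inter_eq_left.2 hp.1,
        Finset.disjoint_iff_inter_eq_empty.1 (h.symm.mono_left hp.2), Finset.union_empty]
    show ((p.1 ∪ p.2) ∩ U, (p.1 ∪ p.2) ∩ W) = p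
    have h2 : (p.1 ∪ p.2) ∩ W = p.2 := by
      rw [Finset.union_inter_distrib_right, Finset.inter_eq_left.2 hp.2,
        Finset.disjoint_iff_inter_eq_empty.1 (h.mono_left hp.1), Finset.empty_union]
    simp [h1, h2]
  · intro S hS
    rw [Finset.mem_powerset] at hS
    have : (S ∩ U) ∪ (S ∩ W) = S := by
      rw [← Finset.inter_union_distrib_left]
      exact Finset.inter_eq_left.2 hS
    simp only [this]

lemma shapley_gamma (d : ℕ) (hd : 1 ≤ d) (i : Fin d) (T : Finset (Fin d)) :
    shapley d (fun S => gammaCoeff T.card ((S ∩ T).card)) i = if T = {i} then 1 else 0 := by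
  by_cases hiT : i ∈ T
  · -- i ∈ T
    have hT1 : 1 ≤ T.card := Finset.card_pos.2 ⟨i, hiT⟩
    set q := T.card - 1 with hq
    have hTq : T.card = q + 1 := by omega
    set T' := T.erase i with hT'
    have hT'card : T'.card = q := by rw [hT', Finset.card_erase_of_mem hiT]
    set V := (Finset.univ : Finset (Fin d)).erase i with hV
    have hVcard : V.card = d - 1 := by
      rw [hV, Finset.card_erase_of_mem (Finset.mem_univ i), Finset.card_univ, Fintype.card_fin]
    have hT'V : T' ⊆ V := Finset.erase_subset_erase i (Finset.subset_univ T)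
    have hqd : q ≤ d - 1 := by
      have := Finset.card_le_card hT'V
      omega
    set W := V \ T' with hW
    have hdisj : Disjoint T' W := Finset.disjoint_sdiff
    have hUW : T' ∪ W = V := Finset.union_sdiff_of_subset hT'V
    set N := d - 1 - q with hN
    have hWcard : W.card = N := by
      rw [hW, Finset.card_sdiff_of_subset hT'V, hVcard, hT'card]
    have hNq : N + q = d - 1 := by omega
    have hNqd : (N : ℝ) + q + 1 = d := by
      have h : N + q + 1 = d := by omega
      exact_mod_cast h
    -- step A : rewrite each summand
    have stepA : ∀ S ∈ V.powerset,
        ((gammaCoeff T.card (((insert i S) ∩ T).card) - gammaCoeff T.card ((S ∩ T).card))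
          / ((d-1).choose S.card : ℝ))
        = gammaCoeff q ((S ∩ T').card) / ((d-1).choose S.card : ℝ) := by
      intro S hS
      rw [Finset.mem_powerset] at hS
      have hiS : i ∉ S := fun hiS => (Finset.mem_erase.1 (hS hiS)).1 rfl
      have h1 : (insert i S) ∩ T = insert i (S ∩ T) := Finset.insert_inter_of_mem hiT
      have h2 : i ∉ S ∩ T := fun hm => hiS (Finset.mem_inter.1 hm).1
      have h3 : ((insert i S) ∩ T).card = (S ∩ T).card + 1 := by
        rw [h1, Finset.card_insert_of_notMem h2]
      have h4 : S ∩ T' = S ∩ T := by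
        ext x
        simp only [hT', Finset.mem_inter, Finset.mem_erase]
        constructor
        · rintro ⟨hxS, _, hxT⟩; exact ⟨hxS, hxT⟩
        · rintro ⟨hxS, hxT⟩
          exact ⟨hxS, fun hxi => hiS (hxi ▸ hxS), hxT⟩
      rw [h3, h4, hTq, gammaCoeff_succ_succ]
      ring
    -- the sum
    have key : ∑ S ∈ V.powerset,
        ((gammaCoeff T.card (((insert i S) ∩ T).card) - gammaCoeff T.card ((S ∩ T).card))
          / ((d-1).choose S.card : ℝ))
        = (d : ℝ) / ((q : ℝ) + 1) * (if q = 0 then 1 else 0) := by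
      rw [Finset.sum_congr rfl stepA, ← hUW,
        sum_powerset_union_split T' W hdisj
          (fun S => gammaCoeff q ((S ∩ T').card) / ((d-1).choose S.card : ℝ))]
      have inner : ∀ A ∈ T'.powerset,
          ∑ B ∈ W.powerset, gammaCoeff q (((A ∪ B) ∩ T').card) / ((d-1).choose ((A ∪ B).card) : ℝ)
          = gammaCoeff q A.card * ((d:ℝ) / (((q:ℝ)+1) * (q.choose A.card : ℝ))) := by
        intro A hA
        rw [Finset.mem_powerset] at hA
        have hAcard : A.card ≤ q := by
          have := Finset.card_le_card hA; omega
        have hstep : ∀ B ∈ W.powerset,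
            gammaCoeff q (((A ∪ B) ∩ T').card) / ((d-1).choose ((A ∪ B).card) : ℝ)
            = gammaCoeff q A.card / ((d-1).choose (A.card + B.card) : ℝ) := by
          intro B hB
          rw [Finset.mem_powerset] at hB
          have hABdisj : Disjoint A B := hdisj.mono hA hB
          have h5 : (A ∪ B) ∩ T' = A := by
            rw [Finset.union_inter_distrib_right, Finset.inter_eq_left.2 hA,
              Finset.disjoint_iff_inter_eq_empty.1 (hdisj.symm.mono_left hB),
              Finset.union_empty]
          have h6 : (A ∪ B).card = A.card + B.card := Finset.card_union_of_disjoint hABdisj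
          rw [h5, h6]
        rw [Finset.sum_congr rfl hstep]
        rw [Finset.sum_powerset_apply_card
          (fun m => gammaCoeff q A.card / ((d-1).choose (A.card + m) : ℝ))]
        rw [hWcard]
        have : ∀ m ∈ Finset.range (N+1),
            (N.choose m) • (gammaCoeff q A.card / ((d-1).choose (A.card + m) : ℝ))
            = gammaCoeff q A.card * ((N.choose m : ℝ) / ((N + q).choose (m + A.card) : ℝ)) := by
          intro m hm
          rw [nsmul_eq_mul, hNq]
          have : A.card + m = m + A.card := by omega
          rw [this]
          ring
        rw [Finset.sum_congr rfl this, ← Finset.mul_sum,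
          sum_choose_div_choose N q A.card hAcard, hNqd]
      rw [Finset.sum_congr rfl inner]
      rw [Finset.sum_powerset_apply_card
        (fun r => gammaCoeff q r * ((d:ℝ) / (((q:ℝ)+1) * (q.choose r : ℝ))))]
      rw [hT'card]
      have : ∀ r ∈ Finset.range (q+1),
          (q.choose r) • (gammaCoeff q r * ((d:ℝ) / (((q:ℝ)+1) * (q.choose r : ℝ))))
          = ((d : ℝ)/((q:ℝ)+1)) * gammaCoeff q r := by
        intro r hr
        rw [Finset.mem_range] at hr
        have hpos : (0:ℝ) < (q.choose r : ℝ) := choose_pos_real (by omega)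
        rw [nsmul_eq_mul]
        field_simp
      rw [Finset.sum_congr rfl this, ← Finset.mul_sum, gammaCoeff_sum]
    rw [shapley, key]
    by_cases hq0 : q = 0
    · have hT1' : T = {i} := by
        have : T.card = 1 := by omega
        rw [Finset.card_eq_one] at this
        obtain ⟨a, ha⟩ := this
        rw [ha] at hiT ⊢
        rw [Finset.mem_singleton] at hiT
        rw [hiT]
      rw [if_pos hT1', if_pos hq0, hq0]
      have hdpos : (0:ℝ) < d := by exact_mod_cast hd
      field_simp
      simp
    · have hT1' : T ≠ {i} := by
        intro h
        rw [h, Finset.card_singleton] at hTq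
        omega
      rw [if_neg hT1', if_neg hq0]
      ring
  · -- i ∉ T
    have hTne : T ≠ {i} := fun h => hiT (h ▸ Finset.mem_singleton_self i)
    rw [if_neg hTne, shapley]
    have : ∀ S ∈ ((Finset.univ : Finset (Fin d)).erase i).powerset,
        ((gammaCoeff T.card (((insert i S) ∩ T).card) - gammaCoeff T.card ((S ∩ T).card))
          / ((d-1).choose S.card : ℝ)) = 0 := by
      intro S _
      rw [Finset.insert_inter_of_notMem hiT]
      simp
    rw [Finset.sum_congr rfl this]
    simp

lemma natA (n k : ℕ) (hk : k ≤ n) :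
    (n+1) * (n.choose k) = (n+1).choose k * (n+1-k) := by
  rw [← Nat.choose_succ_right_eq, ← Nat.add_one_mul_choose_eq]

lemma shapley_sum_lin (d : ℕ) (F : Finset (Finset (Fin d)))
    (g : Finset (Fin d) → Finset (Fin d) → ℝ) (c : Finset (Fin d) → ℝ) (i : Fin d) :
    shapley d (fun S => ∑ T ∈ F, g T S * c T) i = ∑ T ∈ F, shapley d (g T) i * c T := by
  unfold shapley
  have h1 : ∀ S ∈ ((Finset.univ : Finset (Fin d)).erase i).powerset,
      ((∑ T ∈ F, g T (insert i S) * c T) - (∑ T ∈ F, g T S * c T)) / ((d-1).choose S.card : ℝ)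
      = ∑ T ∈ F, ((g T (insert i S) - g T S) / ((d-1).choose S.card : ℝ)) * c T := by
    intro S _
    rw [← Finset.sum_sub_distrib, Finset.sum_div]
    refine Finset.sum_congr rfl fun T _ => ?_
    ring
  rw [Finset.sum_congr rfl h1, Finset.sum_comm, Finset.mul_sum]
  refine Finset.sum_congr rfl fun T _ => ?_
  rw [← Finset.sum_mul]
  ring

lemma shapley_sub (d : ℕ) (a b : Finset (Fin d) → ℝ) (i : Fin d) :
    shapley d (fun S => a S - b S) i = shapley d a i - shapley d b i := by
  unfold shapley
  rw [← mul_sub, ← Finset.sum_sub_distrib]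
  congr 1
  refine Finset.sum_congr rfl fun S _ => ?_
  ring

lemma shapley_coeff (d : ℕ) (r : Finset (Fin d) → ℝ) (i : Fin d) :
    shapley d r i = ∑ S : Finset (Fin d),
      (if i ∈ S then (1/(d:ℝ)) / ((d-1).choose (S.card - 1) : ℝ)
       else -((1/(d:ℝ)) / ((d-1).choose S.card : ℝ))) * r S := by
  unfold shapley
  have hsplit : ∑ S : Finset (Fin d),
      (if i ∈ S then (1/(d:ℝ)) / ((d-1).choose (S.card - 1) : ℝ)
       else -((1/(d:ℝ)) / ((d-1).choose S.card : ℝ))) * r S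
      = (∑ S ∈ Finset.univ.filter (fun S => i ∈ S),
          ((1/(d:ℝ)) / ((d-1).choose (S.card - 1) : ℝ)) * r S)
        + ∑ S ∈ Finset.univ.filter (fun S => i ∉ S),
          (-((1/(d:ℝ)) / ((d-1).choose S.card : ℝ))) * r S := by
    rw [← Finset.sum_ite (fun S => ((1/(d:ℝ)) / ((d-1).choose (S.card - 1) : ℝ)) * r S)
      (fun S => (-((1/(d:ℝ)) / ((d-1).choose S.card : ℝ))) * r S)]
    refine Finset.sum_congr rfl fun S _ => ?_
    by_cases h : i ∈ S <;> simp [h]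
  rw [hsplit]
  have hA : ∑ S ∈ ((Finset.univ : Finset (Fin d)).erase i).powerset,
      r (insert i S) / ((d-1).choose S.card : ℝ)
      = ∑ S ∈ Finset.univ.filter (fun S => i ∈ S), r S / ((d-1).choose (S.card - 1) : ℝ) := by
    refine Finset.sum_nbij' (fun S => insert i S) (fun S => S.erase i) ?_ ?_ ?_ ?_ ?_
    · intro S hS
      rw [Finset.mem_filter]
      exact ⟨Finset.mem_univ _, Finset.mem_insert_self i S⟩
    · intro S hS
      rw [Finset.mem_powerset]
      exact Finset.erase_subset_erase i (Finset.subset_univ S)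
    · intro S hS
      rw [Finset.mem_powerset] at hS
      have hiS : i ∉ S := fun h => (Finset.mem_erase.1 (hS h)).1 rfl
      exact Finset.erase_insert hiS
    · intro S hS
      rw [Finset.mem_filter] at hS
      exact Finset.insert_erase hS.2
    · intro S hS
      rw [Finset.mem_powerset] at hS
      have hiS : i ∉ S := fun h => (Finset.mem_erase.1 (hS h)).1 rfl
      rw [Finset.card_insert_of_notMem hiS]
      simp
  have hpe : ((Finset.univ : Finset (Fin d)).erase i).powerset
      = Finset.univ.filter (fun S => i ∉ S) := by
    ext S
    simp [Finset.subset_erase]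
  have hLHS : ∑ S ∈ ((Finset.univ : Finset (Fin d)).erase i).powerset,
      (r (insert i S) - r S)/((d-1).choose S.card : ℝ)
      = ∑ S ∈ ((Finset.univ : Finset (Fin d)).erase i).powerset,
          r (insert i S)/((d-1).choose S.card : ℝ)
        - ∑ S ∈ ((Finset.univ : Finset (Fin d)).erase i).powerset,
          r S/((d-1).choose S.card : ℝ) := by
    rw [← Finset.sum_sub_distrib]
    exact Finset.sum_congr rfl fun S _ => sub_div _ _ _
  rw [hLHS, hA, hpe, mul_sub, Finset.mul_sum, Finset.mul_sum, sub_eq_add_neg, ← Finset.sum_neg_distrib]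
  congr 1
  · exact Finset.sum_congr rfl fun S _ => by ring
  · exact Finset.sum_congr rfl fun S _ => by ring

lemma shapley_decomp (d : ℕ) (hd : 2 ≤ d) (r : Finset (Fin d) → ℝ) (i : Fin d) :
    shapley d r i
      = (1/((d:ℝ)*((d:ℝ)-1))) * ∑ j : Fin d, (∑ S : Finset (Fin d),
          shapleyWeight d S * r S * ((if i ∈ S then (1:ℝ) else 0) - (if j ∈ S then (1:ℝ) else 0)))
        + (1/(d:ℝ))*(r Finset.univ - r ∅) := by
  have hne : (Finset.univ : Finset (Fin d)).Nonempty := ⟨i, Finset.mem_univ i⟩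
  have hcardu : (Finset.univ : Finset (Fin d)).card = d := by
    rw [Finset.card_univ, Fintype.card_fin]
  rw [shapley_coeff]
  -- simplify the double sum over j
  have hswap : ∑ j : Fin d, (∑ S : Finset (Fin d),
        shapleyWeight d S * r S * ((if i ∈ S then (1:ℝ) else 0) - (if j ∈ S then (1:ℝ) else 0)))
      = ∑ S : Finset (Fin d),
        shapleyWeight d S * r S * ((d:ℝ) * (if i ∈ S then (1:ℝ) else 0) - (S.card : ℝ)) := by
    rw [Finset.sum_comm]
    refine Finset.sum_congr rfl fun S _ => ?_
    rw [← Finset.mul_sum]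
    congr 1
    rw [Finset.sum_sub_distrib, Finset.sum_const]
    have h1 : ∑ j : Fin d, (if j ∈ S then (1:ℝ) else 0) = (S.card : ℝ) := by
      rw [Finset.sum_boole]
      congr 1
      rw [Finset.filter_mem_eq_inter, Finset.univ_inter]
    rw [h1, hcardu, nsmul_eq_mul]
  rw [hswap]
  have hu : (1/(d:ℝ)) * (r Finset.univ - r ∅)
      = ∑ S : Finset (Fin d), ((if S = Finset.univ then (1/(d:ℝ)) else 0)
          - (if S = (∅ : Finset (Fin d)) then (1/(d:ℝ)) else 0)) * r S := by
    have e1 : ∑ S : Finset (Fin d), (if S = Finset.univ then (1/(d:ℝ)) * r S else 0)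
        = (1/(d:ℝ)) * r Finset.univ := by
      rw [Finset.sum_ite_eq' Finset.univ Finset.univ (fun S => (1/(d:ℝ)) * r S)]
      simp
    have e2 : ∑ S : Finset (Fin d), (if S = (∅ : Finset (Fin d)) then (1/(d:ℝ)) * r S else 0)
        = (1/(d:ℝ)) * r ∅ := by
      rw [Finset.sum_ite_eq' Finset.univ (∅ : Finset (Fin d)) (fun S => (1/(d:ℝ)) * r S)]
      simp
    rw [mul_sub, ← e1, ← e2, ← Finset.sum_sub_distrib]
    refine Finset.sum_congr rfl fun S _ => ?_
    by_cases h1 : S = Finset.univ <;> by_cases h2 : S = (∅ : Finset (Fin d)) <;>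
      simp [h1, h2, hne.ne_empty, Ne.symm hne.ne_empty] <;> ring_nf
  rw [hu, Finset.mul_sum, ← Finset.sum_add_distrib]
  refine Finset.sum_congr rfl fun S _ => ?_
  -- pointwise coefficient identity
  by_cases hSu : S = Finset.univ
  · subst hSu
    have hiu : i ∈ Finset.univ := Finset.mem_univ i
    rw [if_pos hiu, if_pos rfl, if_neg hne.ne_empty]
    have hw : shapleyWeight d Finset.univ = 0 := by
      rw [shapleyWeight, if_neg]
      rw [hcardu]
      omega
    rw [hw, hcardu]
    have : (d-1).choose (d-1) = 1 := Nat.choose_self _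
    rw [this]
    push_cast
    ring
  · by_cases hSe : S = (∅ : Finset (Fin d))
    · subst hSe
      rw [if_neg (Finset.notMem_empty i), if_neg hSu, if_pos rfl]
      have hw : shapleyWeight d ∅ = 0 := by
        rw [shapleyWeight, if_neg]; simp
      rw [hw, Finset.card_empty]
      have : (d-1).choose 0 = 1 := Nat.choose_zero_right _
      rw [this]
      push_cast
      ring
    · -- 0 < card < d
      have hs1 : 1 ≤ S.card := Finset.card_pos.2 (Finset.nonempty_of_ne_empty hSe)
      have hsd : S.card < d := by
        have h := Finset.card_lt_card (Finset.ssubset_univ_iff.2 hSu)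
        rwa [hcardu] at h
      obtain ⟨n, hn⟩ : ∃ n, d = n + 2 := ⟨d - 2, by omega⟩
      obtain ⟨k, hk⟩ : ∃ k, S.card = k + 1 := ⟨S.card - 1, by omega⟩
      have hkn : k ≤ n := by omega
      have hw : shapleyWeight d S = 1 / (n.choose k : ℝ) := by
        rw [shapleyWeight, if_pos ⟨by omega, hsd⟩, hk]
        rw [show d - 2 = n from by omega, show k + 1 - 1 = k from by omega]
      rw [if_neg hSu, if_neg hSe, hw, hk]
      rw [show d - 1 = n + 1 from by omega, show k + 1 - 1 = k from by omega]
      have hdR : (d:ℝ) = (n:ℝ) + 2 := by rw [hn]; push_cast; ring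
      rw [hdR]
      have c0 : (0:ℝ) < (n.choose k : ℝ) := choose_pos_real hkn
      have c1 : (0:ℝ) < ((n+1).choose k : ℝ) := choose_pos_real (by omega)
      have c2 : (0:ℝ) < ((n+1).choose (k+1) : ℝ) := choose_pos_real (by omega)
      have iA : ((n:ℝ)+1) * (n.choose k : ℝ) = ((n+1).choose k : ℝ) * ((n:ℝ)+1-k) := by
        have h := natA n k hkn
        have h2 := congrArg (Nat.cast (R := ℝ)) h
        push_cast [Nat.cast_sub (by omega : k ≤ n+1)] at h2
        linarith
      have iB : ((n:ℝ)+1) * (n.choose k : ℝ) = ((n+1).choose (k+1) : ℝ) * ((k:ℝ)+1) := by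
        have h := Nat.add_one_mul_choose_eq n k
        have h2 := congrArg (Nat.cast (R := ℝ)) h
        push_cast at h2
        linarith
      have hden : (0:ℝ) < ((n:ℝ)+2)*((n:ℝ)+2-1)*(n.choose k : ℝ) := by
        have hn0 : (0:ℝ) ≤ n := Nat.cast_nonneg n
        have h1 : (0:ℝ) < (n:ℝ)+2 := by linarith
        have h2 : (0:ℝ) < (n:ℝ)+2-1 := by linarith
        exact mul_pos (mul_pos h1 h2) c0
      by_cases hiS : i ∈ S
      · rw [if_pos hiS, if_pos hiS]
        push_cast
        have hn1 : (n:ℝ)+2-1 ≠ 0 := by linarith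
        field_simp
        linear_combination (r S) * iA
      · rw [if_neg hiS, if_neg hiS]
        push_cast
        have hn1 : (n:ℝ)+2-1 ≠ 0 := by linarith
        field_simp
        linear_combination (-(r S)) * iB

lemma weight_nonneg (d : ℕ) (S : Finset (Fin d)) : 0 ≤ shapleyWeight d S := by
  rw [shapleyWeight]
  split
  · positivity
  · exact le_refl 0

lemma quad_zero (B C : ℝ) (hC : 0 ≤ C) (h : ∀ ε : ℝ, 0 ≤ ε^2 * C - 2*ε*B) : B = 0 := by
  by_contra hB
  have hC1 : (0:ℝ) < C + 1 := by linarith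
  set x := B/(C+1) with hx
  have hxB : B = x * (C+1) := (div_mul_cancel₀ B (ne_of_gt hC1)).symm
  have hxne : x ≠ 0 := fun h0 => hB (by rw [hxB, h0, zero_mul])
  have h1 := h x
  rw [hxB] at h1
  nlinarith [mul_pos (mul_self_pos.2 hxne) (by linarith : (0:ℝ) < C + 2)]

lemma gamma_single (d : ℕ) (i : Fin d) (S : Finset (Fin d)) :
    gammaCoeff ({i} : Finset (Fin d)).card ((S ∩ {i}).card)
      = (if i ∈ S then (1:ℝ) else 0) - 1/2 := by
  rw [Finset.card_singleton]
  by_cases h : i ∈ S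
  · rw [Finset.inter_singleton_of_mem h, Finset.card_singleton, gammaCoeff_one_one, if_pos h]
    norm_num
  · rw [Finset.inter_singleton_of_notMem h, Finset.card_empty, gammaCoeff_one_zero, if_neg h]
    norm_num

/-- `k_ADD`-SHAP converges to the Shapley value: any minimizer of the `k_ADD`-SHAP objective
subject to its efficiency constraint has singleton coefficients equal to the Shapley values. -/
theorem kadd_shap_converges
    (d k : ℕ) (hd : 2 ≤ d) (hk1 : 1 ≤ k) (hkd : k ≤ d)
    (ν : Finset (Fin d) → ℝ)
    (I : Finset (Fin d) → ℝ)
    (hconstr : ν Finset.univ - ν ∅ =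
      ∑ T ∈ (Finset.univ : Finset (Fin d)).powerset.filter (fun T => T.card ≤ k),
        (gammaCoeff T.card T.card - gammaCoeff T.card 0) * I T)
    (hmin : ∀ J : Finset (Fin d) → ℝ,
      (ν Finset.univ - ν ∅ =
        ∑ T ∈ (Finset.univ : Finset (Fin d)).powerset.filter (fun T => T.card ≤ k),
          (gammaCoeff T.card T.card - gammaCoeff T.card 0) * J T) →
      (∑ S : Finset (Fin d), shapleyWeight d S *
          (ν S - ∑ T ∈ (Finset.univ : Finset (Fin d)).powerset.filter (fun T => T.card ≤ k),
            gammaCoeff T.card (S ∩ T).card * I T) ^ 2) ≤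
        (∑ S : Finset (Fin d), shapleyWeight d S *
          (ν S - ∑ T ∈ (Finset.univ : Finset (Fin d)).powerset.filter (fun T => T.card ≤ k),
            gammaCoeff T.card (S ∩ T).card * J T) ^ 2)) :
    ∀ i : Fin d, I {i} = shapley d ν i := by
  intro i
  set Fk := (Finset.univ : Finset (Fin d)).powerset.filter (fun T => T.card ≤ k) with hFk
  set g : Finset (Fin d) → ℝ :=
    fun S => ∑ T ∈ Fk, gammaCoeff T.card ((S ∩ T).card) * I T with hg
  set r : Finset (Fin d) → ℝ := fun S => ν S - g S with hr
  have hiFk : ∀ j : Fin d, ({j} : Finset (Fin d)) ∈ Fk := by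
    intro j
    rw [hFk, Finset.mem_filter, Finset.mem_powerset]
    exact ⟨Finset.subset_univ _, by simp [hk1]⟩
  -- first order conditions
  have hfoc : ∀ i' j : Fin d, i' ≠ j →
      ∑ S : Finset (Fin d), shapleyWeight d S * r S *
        ((if i' ∈ S then (1:ℝ) else 0) - (if j ∈ S then (1:ℝ) else 0)) = 0 := by
    intro i' j hij
    set H : Finset (Fin d) → ℝ := fun S =>
      (if i' ∈ S then (1:ℝ) else 0) - (if j ∈ S then (1:ℝ) else 0) with hH
    set B := ∑ S : Finset (Fin d), shapleyWeight d S * r S * H S with hB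
    set C := ∑ S : Finset (Fin d), shapleyWeight d S * (H S)^2 with hC
    have hCnn : 0 ≤ C :=
      Finset.sum_nonneg fun S _ => mul_nonneg (weight_nonneg d S) (sq_nonneg _)
    have hkey : ∀ ε : ℝ, 0 ≤ ε^2 * C - 2*ε*B := by
      intro ε
      set J : Finset (Fin d) → ℝ := fun T =>
        I T + ε * (if T = ({i'} : Finset (Fin d)) then 1 else 0)
            - ε * (if T = ({j} : Finset (Fin d)) then 1 else 0) with hJ
      -- the model of J
      have hrdef : ∀ S : Finset (Fin d), r S = ν S - g S := fun S => rfl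
      have hmodel : ∀ S : Finset (Fin d),
          ∑ T ∈ Fk, gammaCoeff T.card ((S ∩ T).card) * J T = g S + ε * H S := by
        intro S
        rw [hJ]
        simp only [mul_add, mul_sub]
        rw [Finset.sum_sub_distrib, Finset.sum_add_distrib]
        have e1 : ∑ T ∈ Fk, gammaCoeff T.card ((S ∩ T).card)
              * (ε * (if T = ({i'} : Finset (Fin d)) then 1 else 0))
            = ε * ((if i' ∈ S then (1:ℝ) else 0) - 1/2) := by
          have h1 : ∀ T ∈ Fk, gammaCoeff T.card ((S ∩ T).card)
                * (ε * (if T = ({i'} : Finset (Fin d)) then 1 else 0))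
              = if T = ({i'} : Finset (Fin d)) then
                  ε * gammaCoeff (({i'} : Finset (Fin d)).card) ((S ∩ ({i'} : Finset (Fin d))).card)
                else 0 := by
            intro T _
            by_cases h : T = ({i'} : Finset (Fin d))
            · subst h
              split_ifs with hh
              · ring
              · exact absurd rfl hh
            · simp [h]
          rw [Finset.sum_congr rfl h1,
            Finset.sum_ite_eq' Fk ({i'} : Finset (Fin d)), if_pos (hiFk i'), gamma_single]
        have e2 : ∑ T ∈ Fk, gammaCoeff T.card ((S ∩ T).card)
              * (ε * (if T = ({j} : Finset (Fin d)) then 1 else 0))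
            = ε * ((if j ∈ S then (1:ℝ) else 0) - 1/2) := by
          have h1 : ∀ T ∈ Fk, gammaCoeff T.card ((S ∩ T).card)
                * (ε * (if T = ({j} : Finset (Fin d)) then 1 else 0))
              = if T = ({j} : Finset (Fin d)) then
                  ε * gammaCoeff (({j} : Finset (Fin d)).card) ((S ∩ ({j} : Finset (Fin d))).card)
                else 0 := by
            intro T _
            by_cases h : T = ({j} : Finset (Fin d))
            · subst h
              split_ifs with hh
              · ring
              · exact absurd rfl hh
            · simp [h]
          rw [Finset.sum_congr rfl h1,
            Finset.sum_ite_eq' Fk ({j} : Finset (Fin d)), if_pos (hiFk j), gamma_single]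
        rw [e1, e2, hH, hg]
        ring
      -- J satisfies the constraint
      have hJc : ν Finset.univ - ν ∅
          = ∑ T ∈ Fk, (gammaCoeff T.card T.card - gammaCoeff T.card 0) * J T := by
        rw [hconstr, hJ]
        simp only [mul_add, mul_sub]
        rw [Finset.sum_sub_distrib, Finset.sum_add_distrib]
        have e1 : ∀ (m : Fin d), ∑ T ∈ Fk, (gammaCoeff T.card T.card - gammaCoeff T.card 0)
              * (ε * (if T = ({m} : Finset (Fin d)) then 1 else 0))
            = ε * (gammaCoeff 1 1 - gammaCoeff 1 0) := by
          intro m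
          have h1 : ∀ T ∈ Fk, (gammaCoeff T.card T.card - gammaCoeff T.card 0)
                * (ε * (if T = ({m} : Finset (Fin d)) then 1 else 0))
              = if T = ({m} : Finset (Fin d)) then
                  ε * (gammaCoeff (({m} : Finset (Fin d)).card) (({m} : Finset (Fin d)).card)
                    - gammaCoeff (({m} : Finset (Fin d)).card) 0)
                else 0 := by
            intro T _
            by_cases h : T = ({m} : Finset (Fin d))
            · subst h
              split_ifs with hh
              · ring
              · exact absurd rfl hh
            · simp [h]
          rw [Finset.sum_congr rfl h1,
            Finset.sum_ite_eq' Fk ({m} : Finset (Fin d)), if_pos (hiFk m), Finset.card_singleton]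
        rw [e1 i', e1 j]
        ring
      -- expand the objective
      have hexp : ∑ S : Finset (Fin d), shapleyWeight d S
            * (ν S - ∑ T ∈ Fk, gammaCoeff T.card ((S ∩ T).card) * J T)^2
          = (∑ S : Finset (Fin d), shapleyWeight d S
              * (ν S - ∑ T ∈ Fk, gammaCoeff T.card ((S ∩ T).card) * I T)^2)
            - 2*ε*B + ε^2*C := by
        rw [hB, hC, Finset.mul_sum, Finset.mul_sum, ← Finset.sum_sub_distrib,
          ← Finset.sum_add_distrib]
        refine Finset.sum_congr rfl fun S _ => ?_
        rw [hmodel S, hrdef S]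
        show shapleyWeight d S * (ν S - (g S + ε * H S))^2
            = shapleyWeight d S * (ν S - g S)^2
              - 2*ε*(shapleyWeight d S * (ν S - g S) * H S)
              + ε^2*(shapleyWeight d S * (H S)^2)
        ring
      have hle := hmin J hJc
      rw [hexp] at hle
      linarith
    exact quad_zero B C hCnn hkey
  -- value of shapley on the model g
  have hgi : shapley d g i = I {i} := by
    rw [hg, shapley_sum_lin d Fk (fun T S => gammaCoeff T.card ((S ∩ T).card)) I i]
    have : ∀ T ∈ Fk, shapley d (fun S => gammaCoeff T.card ((S ∩ T).card)) i * I T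
        = (if T = ({i} : Finset (Fin d)) then 1 else 0) * I T := by
      intro T _
      rw [shapley_gamma d (by omega) i T]
    rw [Finset.sum_congr rfl this]
    simp only [ite_mul, one_mul, zero_mul]
    rw [Finset.sum_ite_eq' Fk ({i} : Finset (Fin d)) I, if_pos (hiFk i)]
  -- efficiency gives r univ = r ∅
  have hgu : g Finset.univ - g ∅
      = ∑ T ∈ Fk, (gammaCoeff T.card T.card - gammaCoeff T.card 0) * I T := by
    rw [hg, ← Finset.sum_sub_distrib]
    refine Finset.sum_congr rfl fun T _ => ?_
    rw [Finset.univ_inter, Finset.empty_inter, Finset.card_empty]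
    ring
  have hru : r Finset.univ - r ∅ = 0 := by
    show (ν Finset.univ - g Finset.univ) - (ν ∅ - g ∅) = 0
    have h1 : g Finset.univ - g ∅
        = ∑ T ∈ Fk, (gammaCoeff T.card T.card - gammaCoeff T.card 0) * I T := hgu
    linarith [hconstr, h1]
  -- shapley of the residual vanishes
  have hri : shapley d r i = 0 := by
    rw [shapley_decomp d hd r i]
    have hz : ∑ j : Fin d, (∑ S : Finset (Fin d),
        shapleyWeight d S * r S * ((if i ∈ S then (1:ℝ) else 0) - (if j ∈ S then (1:ℝ) else 0)))
        = 0 := by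
      refine Finset.sum_eq_zero fun j _ => ?_
      by_cases hij : i = j
      · subst hij
        exact Finset.sum_eq_zero fun S _ => by rw [sub_self, mul_zero]
      · exact hfoc i j hij
    rw [hz, hru]
    ring
  have hsplit : shapley d ν i - shapley d g i = shapley d r i := by
    rw [hr, ← shapley_sub d ν g i]
  rw [hri, hgi] at hsplit
  linarith [hsplit]
end

section
/- Let d ≥ 2 and let ν : 2^D → ℝ be a cooperative game on D = {1,…,d} with ν(∅) = 0 whose Möbius transform vanishes above order 2, i.e., ν(S) = Σ_{T ⊆ S, 1 ≤ |T| ≤ 2} m(T) for all S, where m is the Möbius transform of ν. Given a paired weighted sample (S_1,w_1),…,(S_{2r},w_{2r}) such that X̃_{≤2} has full column rank, the unique minimizer φ̂ of ‖X̃_1 φ − ỹ‖₂² over {φ ∈ ℝ^d : ⟨φ,𝟙⟩ = ν(D)} satisfies φ̂_i = φ_i^SV[ν] for every i ∈ D; that is, paired KernelSHAP exactly recovers the Shapley values of games with interactions of order at most 2. -/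
open Finset Matrix

/-- Möbius transform `m(S) = Σ_{L ⊆ S} (−1)^{|S|−|L|}·ν(L)`. -/
noncomputable def moebius (d : ℕ) (ν : Finset (Fin d) → ℝ) (S : Finset (Fin d)) : ℝ :=
  ∑ L ∈ S.powerset, (-1 : ℝ) ^ (S.card - L.card) * ν L

private lemma sumA {α : Type*} [DecidableEq α] (E : Finset α) :
    ∑ T ∈ E.powerset, (1 : ℝ) / (E.card.choose T.card) = E.card + 1 := by
  classical
  rw [Finset.sum_powerset]
  have h : ∀ k ∈ Finset.range (E.card + 1),
      ∑ T ∈ Finset.powersetCard k E, (1 : ℝ) / (E.card.choose T.card) = 1 := by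
    intro k hk
    rw [Finset.mem_range] at hk
    have hkE : k ≤ E.card := Nat.lt_succ_iff.mp hk
    have hpos : 0 < E.card.choose k := Nat.choose_pos hkE
    have h1 : ∀ T ∈ Finset.powersetCard k E,
        (1 : ℝ) / (E.card.choose T.card) = 1 / (E.card.choose k) := by
      intro T hT
      rw [(Finset.mem_powersetCard.mp hT).2]
    rw [Finset.sum_congr rfl h1, Finset.sum_const, Finset.card_powersetCard, nsmul_eq_mul]
    have : ((E.card.choose k : ℕ) : ℝ) ≠ 0 := Nat.cast_ne_zero.mpr hpos.ne'
    field_simp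
  rw [Finset.sum_congr rfl h, Finset.sum_const, Finset.card_range, nsmul_eq_mul, mul_one]
  push_cast; ring

private lemma sumB {α : Type*} [DecidableEq α] (E : Finset α) {j : α} (hj : j ∈ E) :
    ∑ T ∈ E.powerset, (if j ∈ T then (1 : ℝ) / (E.card.choose T.card) else 0)
      = ((E.card : ℝ) + 1) / 2 := by
  classical
  have hpos : 1 ≤ E.card := Finset.card_pos.mpr ⟨j, hj⟩
  obtain ⟨n, hn⟩ : ∃ n, E.card = n + 1 := ⟨E.card - 1, by omega⟩
  have hjnot : j ∉ E.erase j := Finset.notMem_erase j E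
  have hE'card : (E.erase j).card = n := by
    rw [Finset.card_erase_of_mem hj, hn]; omega
  have h0 : E.powerset = (insert j (E.erase j)).powerset := by
    rw [Finset.insert_erase hj]
  rw [h0, Finset.sum_powerset_insert hjnot]
  have hz : ∀ T ∈ (E.erase j).powerset,
      (if j ∈ T then (1 : ℝ) / (E.card.choose T.card) else 0) = 0 := by
    intro T hT
    rw [if_neg fun h => hjnot ((Finset.mem_powerset.mp hT) h)]
  rw [Finset.sum_congr rfl hz, Finset.sum_const, smul_zero, zero_add]
  have h1 : ∀ T ∈ (E.erase j).powerset,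
      (if j ∈ insert j T then (1 : ℝ) / (E.card.choose (insert j T).card) else 0)
        = 1 / (E.card.choose (T.card + 1)) := by
    intro T hT
    rw [if_pos (Finset.mem_insert_self j T),
      Finset.card_insert_of_notMem fun h => hjnot ((Finset.mem_powerset.mp hT) h)]
  rw [Finset.sum_congr rfl h1, Finset.sum_powerset, hE'card]
  have h2 : ∀ k ∈ Finset.range (n + 1),
      ∑ T ∈ Finset.powersetCard k (E.erase j), (1:ℝ) / (E.card.choose (T.card + 1))
        = ((k : ℝ) + 1) / ((n : ℝ) + 1) := by
    intro k hk
    rw [Finset.mem_range] at hk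
    have hkn : k ≤ n := Nat.lt_succ_iff.mp hk
    have h3 : ∀ T ∈ Finset.powersetCard k (E.erase j),
        (1:ℝ) / (E.card.choose (T.card + 1)) = 1 / ((n+1).choose (k + 1)) := by
      intro T hT
      rw [(Finset.mem_powersetCard.mp hT).2, hn]
    rw [Finset.sum_congr rfl h3, Finset.sum_const, Finset.card_powersetCard, hE'card,
      nsmul_eq_mul]
    have hnat := Nat.add_one_mul_choose_eq n k
    have hpos2 : 0 < (n+1).choose (k+1) := Nat.choose_pos (by omega)
    have hc1 : ((n+1).choose (k+1) : ℝ) ≠ 0 := Nat.cast_ne_zero.mpr hpos2.ne'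
    have hc2 : ((n : ℝ) + 1) ≠ 0 := by positivity
    field_simp
    have hnat' : ((n+1) * n.choose k : ℕ) = ((n+1).choose (k+1) * (k+1) : ℕ) := hnat
    have hcast : ((n:ℝ)+1) * (n.choose k : ℝ) = ((n+1).choose (k+1) : ℝ) * ((k:ℝ)+1) := by
      exact_mod_cast hnat'
    linarith [hcast]
  rw [Finset.sum_congr rfl h2]
  have hsum : ∑ k ∈ Finset.range (n + 1), ((k : ℝ) + 1) = ((n:ℝ)+1) * ((n:ℝ)+2) / 2 := by
    have h4 : ((∑ i ∈ Finset.range (n+1), (i:ℕ)) * 2 : ℕ) = (n+1) * n := by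
      rw [Finset.sum_range_id_mul_two]; simp
    have h5 : (∑ i ∈ Finset.range (n+1), (i:ℝ)) * 2 = ((n:ℝ)+1) * n := by
      have := congrArg (fun z : ℕ => (z : ℝ)) h4
      push_cast at this
      linarith
    rw [Finset.sum_add_distrib, Finset.sum_const, Finset.card_range, nsmul_eq_mul, mul_one]
    push_cast
    linarith
  rw [← Finset.sum_div, hsum, hn]
  have hc2 : ((n : ℝ) + 1) ≠ 0 := by positivity
  push_cast
  field_simp
  ring

private lemma bracket (c t : ℕ) (hc1 : 1 ≤ c) (hc2 : c ≤ 2) (ht : t ≤ c) (x : ℝ) :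
    x * ((c - t : ℕ) : ℝ) / c - (if t = 0 then x else 0)
      = x * (t : ℝ) / c - (if t = c then x else 0) := by
  interval_cases c <;> interval_cases t <;> norm_num

/-- Paired KernelSHAP exactly recovers the Shapley values of games whose Möbius transform
vanishes above order 2. -/
theorem paired_kernelshap_exact_on_order_two_games
    (d r : ℕ) (hd : 2 ≤ d)
    (ν : Finset (Fin d) → ℝ) (hν0 : ν ∅ = 0)
    (hν2 : ∀ S : Finset (Fin d),
      ν S = ∑ T ∈ S.powerset.filter (fun T => 1 ≤ T.card ∧ T.card ≤ 2), moebius d ν T)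
    (S : Fin r × Bool → Finset (Fin d)) (w : Fin r × Bool → ℝ)
    (hw : ∀ ℓ, 0 < w ℓ)
    (hpairS : ∀ j : Fin r, S (j, true) = (Finset.univ : Finset (Fin d)) \ S (j, false))
    (hpairw : ∀ j : Fin r, w (j, true) = w (j, false))
    (hrank : LinearIndependent ℝ (X2mat d r S w).transpose)
    (φ : Fin d → ℝ) (hφc : ∑ i, φ i = ν Finset.univ)
    (hφ : ∀ ψ : Fin d → ℝ, (∑ i, ψ i = ν Finset.univ) →
      ∑ ℓ, ((X1mat d r S w).mulVec φ ℓ - yvec d r ν S w ℓ) ^ 2 ≤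
        ∑ ℓ, ((X1mat d r S w).mulVec ψ ℓ - yvec d r ν S w ℓ) ^ 2) :
    ∀ i : Fin d, φ i = shapley d ν i := by
  classical
  set X1 := X1mat d r S w with hX1
  set y := yvec d r ν S w with hy
  set m : Finset (Fin d) → ℝ := moebius d ν with hm
  set I : Finset (Finset (Fin d)) :=
    (Finset.univ : Finset (Fin d)).powerset.filter (fun T => 1 ≤ T.card ∧ T.card ≤ 2) with hI
  set ψ : Fin d → ℝ := fun i => ∑ T ∈ I, (if i ∈ T then m T / T.card else 0) with hψ
  have hIcard : ∀ T ∈ I, 1 ≤ T.card ∧ T.card ≤ 2 := fun T hT => (Finset.mem_filter.mp hT).2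
  -- Step 1 : ν via indicators
  have hnuI : ∀ A : Finset (Fin d), ν A = ∑ T ∈ I, (if T ⊆ A then m T else 0) := by
    intro A
    rw [hν2 A, ← Finset.sum_filter]
    refine Finset.sum_congr ?_ (fun _ _ => rfl)
    ext T
    simp only [hI, Finset.mem_filter, Finset.mem_powerset, Finset.subset_univ, true_and]
    tauto
  -- Step 2 : sums of ψ over a coalition
  have hsumA : ∀ A : Finset (Fin d),
      ∑ i ∈ A, ψ i = ∑ T ∈ I, m T * ((T ∩ A).card : ℝ) / T.card := by
    intro A
    calc ∑ i ∈ A, ψ i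
        = ∑ i ∈ A, ∑ T ∈ I, (if i ∈ T then m T / T.card else 0) := by simp only [hψ]
      _ = ∑ T ∈ I, ∑ i ∈ A, (if i ∈ T then m T / T.card else 0) := Finset.sum_comm
      _ = ∑ T ∈ I, m T * ((T ∩ A).card : ℝ) / T.card := by
          refine Finset.sum_congr rfl fun T hT => ?_
          rw [Finset.sum_ite_mem, Finset.sum_const, nsmul_eq_mul, Finset.inter_comm A T]
          ring
  -- Step 3 : symmetry of the excess under complementation
  have hgsym : ∀ A : Finset (Fin d),
      (∑ i ∈ Finset.univ \ A, ψ i) - ν (Finset.univ \ A) = (∑ i ∈ A, ψ i) - ν A := by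
    intro A
    rw [hsumA, hsumA, hnuI, hnuI, ← Finset.sum_sub_distrib, ← Finset.sum_sub_distrib]
    refine Finset.sum_congr rfl fun T hT => ?_
    obtain ⟨hc1, hc2⟩ := hIcard T hT
    have hTA : T ∩ (Finset.univ \ A) = T \ A := by
      ext x; simp [Finset.mem_sdiff]
    have hcard : (T \ A).card = T.card - (T ∩ A).card := by
      have := Finset.card_sdiff_add_card_inter T A; omega
    have hsub1 : T ⊆ A ↔ (T ∩ A).card = T.card := by
      rw [← Finset.inter_eq_left]
      constructor
      · intro h; rw [h]
      · intro h; exact Finset.eq_of_subset_of_card_le Finset.inter_subset_left h.ge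
    have hsub2 : T ⊆ Finset.univ \ A ↔ (T ∩ A).card = 0 := by
      rw [Finset.card_eq_zero, Finset.subset_sdiff]
      simp [Finset.disjoint_iff_inter_eq_empty]
    have htle : (T ∩ A).card ≤ T.card := Finset.card_le_card Finset.inter_subset_left
    rw [hTA, hcard]
    simp only [hsub1, hsub2]
    exact bracket T.card (T ∩ A).card hc1 hc2 htle (m T)
  -- Step 4 : ψ is efficient
  have hψsum : ∑ i, ψ i = ν Finset.univ := by
    rw [hsumA Finset.univ, hnuI Finset.univ]
    refine Finset.sum_congr rfl fun T hT => ?_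
    obtain ⟨hc1, hc2⟩ := hIcard T hT
    rw [Finset.inter_univ, if_pos (Finset.subset_univ T)]
    have hne : (T.card : ℝ) ≠ 0 := Nat.cast_ne_zero.mpr (by omega)
    rw [mul_div_assoc, div_self hne, mul_one]
  -- Step 5 : residual and gradient
  have hρ : ∀ ℓ, X1.mulVec ψ ℓ - y ℓ
      = Real.sqrt (w ℓ) * ((∑ i ∈ S ℓ, ψ i) - ν (S ℓ)) := by
    intro ℓ
    have hmv : X1.mulVec ψ ℓ = Real.sqrt (w ℓ) * ∑ i ∈ S ℓ, ψ i := by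
      have h1 : ∀ i, X1 ℓ i * ψ i = (if i ∈ S ℓ then Real.sqrt (w ℓ) * ψ i else 0) := by
        intro i; by_cases h : i ∈ S ℓ <;> simp [hX1, X1mat, h]
      calc X1.mulVec ψ ℓ = ∑ i, X1 ℓ i * ψ i := rfl
        _ = ∑ i, (if i ∈ S ℓ then Real.sqrt (w ℓ) * ψ i else 0) := by simp only [h1]
        _ = ∑ i ∈ Finset.univ ∩ S ℓ, Real.sqrt (w ℓ) * ψ i := Finset.sum_ite_mem _ _ _
        _ = Real.sqrt (w ℓ) * ∑ i ∈ S ℓ, ψ i := by rw [Finset.univ_inter, Finset.mul_sum]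
    rw [hmv, hy]; simp only [yvec]; ring
  set Λ : ℝ := ∑ j : Fin r, w (j, false) * ((∑ i ∈ S (j, false), ψ i) - ν (S (j, false)))
    with hΛ
  have hgrad : ∀ i : Fin d, ∑ ℓ, X1 ℓ i * (X1.mulVec ψ ℓ - y ℓ) = Λ := by
    intro i
    have hterm : ∀ ℓ, X1 ℓ i * (X1.mulVec ψ ℓ - y ℓ)
        = w ℓ * ((if i ∈ S ℓ then (1:ℝ) else 0) * ((∑ i ∈ S ℓ, ψ i) - ν (S ℓ))) := by
      intro ℓ
      have hsq : Real.sqrt (w ℓ) * Real.sqrt (w ℓ) = w ℓ := Real.mul_self_sqrt (hw ℓ).le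
      rw [hρ ℓ]
      simp only [hX1, X1mat]
      linear_combination ((if i ∈ S ℓ then (1:ℝ) else 0) * ((∑ i ∈ S ℓ, ψ i) - ν (S ℓ))) * hsq
    rw [Finset.sum_congr rfl (fun ℓ _ => hterm ℓ), Fintype.sum_prod_type, hΛ]
    refine Finset.sum_congr rfl fun j _ => ?_
    rw [Fintype.sum_bool, hpairS j, hpairw j]
    have hg := hgsym (S (j, false))
    by_cases hiA : i ∈ S (j, false)
    · have h1 : i ∉ Finset.univ \ S (j, false) := by simp [hiA]
      rw [if_neg h1, if_pos hiA]; ring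
    · have h1 : i ∈ Finset.univ \ S (j, false) := by simp [hiA]
      rw [if_pos h1, if_neg hiA, hg]; ring
  -- Step 6 : quadratic expansion
  have hexp : ∀ χ : Fin d → ℝ, (∑ i, χ i = ν Finset.univ) →
      ∑ ℓ, (X1.mulVec χ ℓ - y ℓ) ^ 2
        = ∑ ℓ, (X1.mulVec ψ ℓ - y ℓ) ^ 2 + ∑ ℓ, (X1.mulVec (χ - ψ) ℓ) ^ 2 := by
    intro χ hχ
    have hdec : ∀ ℓ, X1.mulVec χ ℓ - y ℓ
        = (X1.mulVec ψ ℓ - y ℓ) + X1.mulVec (χ - ψ) ℓ := by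
      intro ℓ
      have hsub : X1.mulVec (χ - ψ) ℓ = X1.mulVec χ ℓ - X1.mulVec ψ ℓ := by
        rw [Matrix.mulVec_sub]; rfl
      rw [hsub]; ring
    have hcross : ∑ ℓ, X1.mulVec (χ - ψ) ℓ * (X1.mulVec ψ ℓ - y ℓ) = 0 := by
      have h1 : ∀ ℓ, X1.mulVec (χ - ψ) ℓ * (X1.mulVec ψ ℓ - y ℓ)
          = ∑ i, (χ i - ψ i) * (X1 ℓ i * (X1.mulVec ψ ℓ - y ℓ)) := by
        intro ℓ
        have hmv : X1.mulVec (χ - ψ) ℓ = ∑ i, X1 ℓ i * (χ - ψ) i := rfl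
        rw [hmv, Finset.sum_mul]
        exact Finset.sum_congr rfl fun i _ => by rw [Pi.sub_apply]; ring
      rw [Finset.sum_congr rfl fun ℓ _ => h1 ℓ, Finset.sum_comm]
      have h2 : ∀ i : Fin d, (∑ ℓ, (χ i - ψ i) * (X1 ℓ i * (X1.mulVec ψ ℓ - y ℓ)))
          = (χ i - ψ i) * Λ := by
        intro i; rw [← Finset.mul_sum, hgrad i]
      rw [Finset.sum_congr rfl fun i _ => h2 i, ← Finset.sum_mul, Finset.sum_sub_distrib,
        hχ, hψsum]
      simp
    calc ∑ ℓ, (X1.mulVec χ ℓ - y ℓ) ^ 2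
        = ∑ ℓ, ((X1.mulVec ψ ℓ - y ℓ) ^ 2 + (X1.mulVec (χ - ψ) ℓ) ^ 2
            + 2 * (X1.mulVec (χ - ψ) ℓ * (X1.mulVec ψ ℓ - y ℓ))) := by
          refine Finset.sum_congr rfl fun ℓ _ => ?_
          rw [hdec ℓ]; ring
      _ = _ := by
          rw [Finset.sum_add_distrib, Finset.sum_add_distrib, ← Finset.mul_sum, hcross]
          ring
  -- Step 7 : the residual difference vanishes
  have hzero : ∀ ℓ, X1.mulVec (φ - ψ) ℓ = 0 := by
    have hmin := hφ ψ hψsum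
    have hexpφ := hexp φ hφc
    have hle : ∑ ℓ, (X1.mulVec (φ - ψ) ℓ) ^ 2 ≤ 0 := by linarith
    have h0 : ∑ ℓ, (X1.mulVec (φ - ψ) ℓ) ^ 2 = 0 :=
      le_antisymm hle (Finset.sum_nonneg fun ℓ _ => sq_nonneg _)
    intro ℓ
    have hsq := (Finset.sum_eq_zero_iff_of_nonneg
      (fun ℓ _ => sq_nonneg (X1.mulVec (φ - ψ) ℓ))).mp h0 ℓ (Finset.mem_univ ℓ)
    exact pow_eq_zero_iff (by norm_num : (2:ℕ) ≠ 0) |>.mp hsq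
  -- Step 8 : linear independence forces φ = ψ
  have hφψ : ∀ i, φ i = ψ i := by
    have hinj : Function.Injective (fun i : Fin d =>
        (⟨{i}, Finset.singleton_nonempty i, by simp⟩ :
          {T : Finset (Fin d) // T.Nonempty ∧ T.card ≤ 2})) := by
      intro a b hab
      have := congrArg (fun z : {T : Finset (Fin d) // T.Nonempty ∧ T.card ≤ 2} =>
        (z : Finset (Fin d))) hab
      simpa using this
    have hli := hrank.comp _ hinj
    have heq : ((X2mat d r S w).transpose ∘ (fun i : Fin d =>
        (⟨{i}, Finset.singleton_nonempty i, by simp⟩ :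
          {T : Finset (Fin d) // T.Nonempty ∧ T.card ≤ 2})))
        = fun i => fun ℓ => X1 ℓ i := by
      funext i ℓ
      show (X2mat d r S w) ℓ ⟨{i}, Finset.singleton_nonempty i, by simp⟩ = X1 ℓ i
      simp [Matrix.transpose_apply, X2mat, hX1, X1mat, Finset.singleton_subset_iff]
    rw [heq] at hli
    have hz : ∑ i : Fin d, (φ i - ψ i) • (fun ℓ => X1 ℓ i) = 0 := by
      funext ℓ
      have h := hzero ℓ
      have hmv : X1.mulVec (φ - ψ) ℓ = ∑ i, (φ i - ψ i) * X1 ℓ i := by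
        have h0 : X1.mulVec (φ - ψ) ℓ = ∑ i, X1 ℓ i * (φ - ψ) i := rfl
        rw [h0]
        exact Finset.sum_congr rfl fun i _ => by rw [Pi.sub_apply]; ring
      rw [hmv] at h
      simpa [Finset.sum_apply] using h
    have hres := Fintype.linearIndependent_iff.mp hli (fun i => φ i - ψ i) hz
    intro i
    have h : φ i - ψ i = 0 := hres i
    linarith
  -- Step 9 : ψ is the Shapley value
  have hshap : ∀ i : Fin d, shapley d ν i = ψ i := by
    intro i
    set E : Finset (Fin d) := Finset.univ.erase i with hE
    have hEcard : E.card = d - 1 := by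
      rw [hE, Finset.card_erase_of_mem (Finset.mem_univ i), Finset.card_univ, Fintype.card_fin]
    have hmarg : ∀ Sx ∈ E.powerset,
        ν (insert i Sx) - ν Sx
          = ∑ T ∈ I, (if i ∈ T then (if T.erase i ⊆ Sx then m T else 0) else 0) := by
      intro Sx hSx
      have hiS : i ∉ Sx := fun h =>
        (Finset.mem_erase.mp ((Finset.mem_powerset.mp hSx) h)).1 rfl
      rw [hnuI, hnuI, ← Finset.sum_sub_distrib]
      refine Finset.sum_congr rfl fun T hT => ?_
      by_cases hiT : i ∈ T
      · have h2 : ¬ (T ⊆ Sx) := fun h => hiS (h hiT)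
        simp [Finset.subset_insert_iff, h2, hiT]
      · have h1 : T ⊆ insert i Sx ↔ T ⊆ Sx := by
          rw [Finset.subset_insert_iff, Finset.erase_eq_of_notMem hiT]
        simp [h1, hiT]
    have hswap : shapley d ν i
        = ∑ T ∈ I, (if i ∈ T then m T * ((1/(d:ℝ)) *
            ∑ Sx ∈ E.powerset, (if T.erase i ⊆ Sx then (1:ℝ)/(E.card.choose Sx.card) else 0))
          else 0) := by
      simp only [shapley]
      rw [← hE, ← hEcard]
      have hstep1 : ∀ Sx ∈ E.powerset,
          (ν (insert i Sx) - ν Sx) / ((E.card.choose Sx.card : ℕ) : ℝ)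
            = ∑ T ∈ I, (if i ∈ T then (if T.erase i ⊆ Sx then m T else 0) else 0)
                / ((E.card.choose Sx.card : ℕ) : ℝ) := by
        intro Sx hSx
        rw [hmarg Sx hSx, Finset.sum_div]
      rw [Finset.sum_congr rfl hstep1, Finset.sum_comm, Finset.mul_sum]
      refine Finset.sum_congr rfl fun T hT => ?_
      by_cases hiT : i ∈ T
      · simp only [hiT, if_true]
        simp only [Finset.mul_sum]
        refine Finset.sum_congr rfl fun Sx hSx => ?_
        by_cases hc : T.erase i ⊆ Sx
        · simp only [hc, if_true]; ring
        · simp [hc]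
      · simp [hiT]
    have hd0 : ((d : ℝ)) ≠ 0 := by positivity
    have hd1 : ((E.card : ℝ) + 1) = d := by
      rw [hEcard, Nat.cast_sub (by omega : 1 ≤ d)]
      ring
    have hval : ∀ T ∈ I, i ∈ T →
        ((1/(d:ℝ)) * ∑ Sx ∈ E.powerset,
            (if T.erase i ⊆ Sx then (1:ℝ)/(E.card.choose Sx.card) else 0))
          = 1 / T.card := by
      intro T hT hiT
      obtain ⟨hc1, hc2⟩ := hIcard T hT
      have hcase : T.card = 1 ∨ T.card = 2 := by omega
      rcases hcase with h1 | h2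
      · obtain ⟨a, ha⟩ := Finset.card_eq_one.mp h1
        have hai : a = i := by
          rw [ha, Finset.mem_singleton] at hiT; exact hiT.symm
        subst hai
        have her : T.erase a = ∅ := by rw [ha, Finset.erase_singleton]
        have hiff : ∀ Sx : Finset (Fin d),
            (if T.erase a ⊆ Sx then (1:ℝ)/(E.card.choose Sx.card) else 0)
              = 1/(E.card.choose Sx.card) := by
          intro Sx; rw [her, if_pos (Finset.empty_subset Sx)]
        rw [Finset.sum_congr rfl fun Sx _ => hiff Sx, sumA E, hd1, h1]
        field_simp; norm_num
      · obtain ⟨x, yy, hxy, hT2⟩ := Finset.card_eq_two.mp h2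
        obtain ⟨j, hji, hTij⟩ : ∃ j, j ≠ i ∧ T = {i, j} := by
          rw [hT2, Finset.mem_insert, Finset.mem_singleton] at hiT
          rcases hiT with h | h
          · exact ⟨yy, by rw [← h] at hxy; exact fun hh => hxy hh.symm, by rw [hT2, h]⟩
          · refine ⟨x, by rw [← h] at hxy; exact fun hh => hxy hh, ?_⟩
            rw [hT2, h, Finset.pair_comm]
        have her : T.erase i = {j} := by
          rw [hTij, show ({i, j} : Finset (Fin d)) = insert i {j} from rfl]
          refine Finset.erase_insert ?_
          simp only [Finset.mem_singleton]
          exact fun h => hji h.symm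
        have hjE : j ∈ E := by
          rw [hE]; exact Finset.mem_erase.mpr ⟨hji, Finset.mem_univ j⟩
        have hiff : ∀ Sx : Finset (Fin d),
            (if T.erase i ⊆ Sx then (1:ℝ)/(E.card.choose Sx.card) else 0)
              = (if j ∈ Sx then (1:ℝ)/(E.card.choose Sx.card) else 0) := by
          intro Sx; simp [her, Finset.singleton_subset_iff]
        rw [Finset.sum_congr rfl fun Sx _ => hiff Sx, sumB E hjE, hd1, h2]
        field_simp; norm_num
    rw [hswap]
    simp only [hψ]
    refine Finset.sum_congr rfl fun T hT => ?_
    by_cases hiT : i ∈ T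
    · simp only [hiT, if_true]
      rw [hval T hT hiT, mul_one_div]
    · simp [hiT]
  intro i
  exact (hφψ i).trans (hshap i).symm
end

section
/- (Projection Lemma) Let n ≥ d₊ > d ≥ 1, let X ∈ ℝ^{n×d} have full column rank, let X₊ ∈ ℝ^{n×d₊} be any matrix whose first d columns equal X, let y ∈ ℝ^n and c ∈ ℝ. Suppose β₊* ∈ ℝ^{d₊} minimizes ‖X₊ β − y‖₂² over the affine set {β ∈ ℝ^{d₊} : ⟨β,𝟙⟩ = c}. Then a vector β ∈ ℝ^d with ⟨β,𝟙⟩ = c minimizes ‖X β − y‖₂² over {β ∈ ℝ^d : ⟨β,𝟙⟩ = c} if and only if it minimizes ‖X β − X₊ β₊*‖₂² over the same affine set; in particular the unique constrained minimizers of the two problems coincide. -/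
open Matrix

/-- Projection Lemma: if `β₊*` minimizes `‖X₊β − y‖²` over the affine set `⟨β,𝟙⟩ = c`,
then a vector `β` with `⟨β,𝟙⟩ = c` minimizes `‖Xβ − y‖²` over that affine set iff it
minimizes `‖Xβ − X₊β₊*‖²` over it. -/
theorem projection_lemma
    (n dp d : ℕ) (hd : 1 ≤ d) (hddp : d < dp) (hdpn : dp ≤ n)
    (X : Matrix (Fin n) (Fin d) ℝ)
    (hX : LinearIndependent ℝ X.transpose)
    (Xp : Matrix (Fin n) (Fin dp) ℝ)
    (hXp : ∀ (i : Fin n) (j : Fin d), Xp i (Fin.castLE (le_of_lt hddp) j) = X i j)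
    (y : Fin n → ℝ) (c : ℝ)
    (βp : Fin dp → ℝ) (hβpc : ∑ j, βp j = c)
    (hβp : ∀ γ : Fin dp → ℝ, (∑ j, γ j = c) →
      ∑ i, (Xp.mulVec βp i - y i) ^ 2 ≤ ∑ i, (Xp.mulVec γ i - y i) ^ 2) :
    ∀ β : Fin d → ℝ, (∑ j, β j = c) →
      ((∀ γ : Fin d → ℝ, (∑ j, γ j = c) →
          ∑ i, (X.mulVec β i - y i) ^ 2 ≤ ∑ i, (X.mulVec γ i - y i) ^ 2) ↔
        (∀ γ : Fin d → ℝ, (∑ j, γ j = c) →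
          ∑ i, (X.mulVec β i - Xp.mulVec βp i) ^ 2 ≤
            ∑ i, (X.mulVec γ i - Xp.mulVec βp i) ^ 2)) := by
  -- the residual
  set r : Fin n → ℝ := fun i => Xp.mulVec βp i - y i with hr
  -- orthogonality of the residual to directions with zero coordinate sum
  have key : ∀ v : Fin dp → ℝ, (∑ j, v j = 0) → ∑ i, Xp.mulVec v i * r i = 0 := by
    intro v hv
    set b : ℝ := ∑ i, Xp.mulVec v i * r i with hb
    set a : ℝ := ∑ i, (Xp.mulVec v i) ^ 2 with ha'
    have ha : 0 ≤ a := Finset.sum_nonneg fun i _ => sq_nonneg _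
    have hq : ∀ t : ℝ, 0 ≤ a * t ^ 2 + 2 * b * t := by
      intro t
      have hsum : ∑ j, (βp j + t * v j) = c := by
        rw [Finset.sum_add_distrib, ← Finset.mul_sum, hv, hβpc]; ring
      have h := hβp (fun j => βp j + t * v j) hsum
      have hexp : ∀ i, Xp.mulVec (fun j => βp j + t * v j) i
          = Xp.mulVec βp i + t * Xp.mulVec v i := by
        intro i
        simp only [Matrix.mulVec, dotProduct]
        rw [Finset.mul_sum, ← Finset.sum_add_distrib]
        apply Finset.sum_congr rfl
        intro j _
        ring
      have hre : ∑ i, (Xp.mulVec (fun j => βp j + t * v j) i - y i) ^ 2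
          = (∑ i, (Xp.mulVec βp i - y i) ^ 2) + (a * t ^ 2 + 2 * b * t) := by
        rw [ha', hb, Finset.sum_mul, Finset.mul_sum, Finset.sum_mul,
          ← Finset.sum_add_distrib, ← Finset.sum_add_distrib]
        apply Finset.sum_congr rfl
        intro i _
        rw [hexp i]
        simp only [hr]
        ring
      rw [hre] at h
      linarith
    by_contra hbne
    have hb2 : 0 < b ^ 2 := by positivity
    have ha1 : (0:ℝ) < a + 1 := by linarith
    have h1 := hq (-(b / (a + 1)))
    have h1' : 0 ≤ (a * (-(b / (a + 1))) ^ 2 + 2 * b * -(b / (a + 1))) * ((a + 1) ^ 2) :=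
      mul_nonneg h1 (by positivity)
    have heq : (a * (-(b / (a + 1))) ^ 2 + 2 * b * -(b / (a + 1))) * ((a + 1) ^ 2)
        = a * b ^ 2 - 2 * b ^ 2 * (a + 1) := by
      field_simp
      ring
    rw [heq] at h1'
    nlinarith [mul_nonneg ha hb2.le]
  -- extension of a `Fin d` vector by zeros
  obtain ⟨e, rfl⟩ : ∃ e, dp = d + e := ⟨dp - d, (Nat.add_sub_cancel' hddp.le).symm⟩
  have hcast : ∀ j : Fin d, Fin.castAdd e j = Fin.castLE (le_of_lt hddp) j := fun j => rfl
  -- cross term vanishes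
  have cross : ∀ γ : Fin d → ℝ, (∑ j, γ j = c) →
      ∑ i, (X.mulVec γ i - Xp.mulVec βp i) * r i = 0 := by
    intro γ hγ
    have hv : ∑ j, (Fin.append γ (0 : Fin e → ℝ) j - βp j) = 0 := by
      rw [Finset.sum_sub_distrib, hβpc, Fin.sum_univ_add]
      simp [hγ]
    have := key (fun j => Fin.append γ (0 : Fin e → ℝ) j - βp j) hv
    have hmv : ∀ i, Xp.mulVec (fun j => Fin.append γ (0 : Fin e → ℝ) j - βp j) i
        = X.mulVec γ i - Xp.mulVec βp i := by
      intro i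
      simp only [Matrix.mulVec, dotProduct]
      rw [eq_sub_iff_add_eq, ← Finset.sum_add_distrib]
      rw [show (∑ j : Fin d, X i j * γ j)
          = ∑ j : Fin d, Xp i (Fin.castAdd e j) * γ j from
        Finset.sum_congr rfl fun j _ => by rw [hcast, hXp]]
      rw [Fin.sum_univ_add]
      simp [mul_sub]
    rw [show ∑ i, (X.mulVec γ i - Xp.mulVec βp i) * r i
        = ∑ i, Xp.mulVec (fun j => Fin.append γ (0 : Fin e → ℝ) j - βp j) i * r i from
      Finset.sum_congr rfl fun i _ => by rw [hmv]]
    exact this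
  -- decomposition
  have decomp : ∀ γ : Fin d → ℝ, (∑ j, γ j = c) →
      ∑ i, (X.mulVec γ i - y i) ^ 2
        = ∑ i, (X.mulVec γ i - Xp.mulVec βp i) ^ 2 + ∑ i, r i ^ 2 := by
    intro γ hγ
    have hc := cross γ hγ
    have : ∑ i, (X.mulVec γ i - y i) ^ 2
        = ∑ i, ((X.mulVec γ i - Xp.mulVec βp i) ^ 2 + r i ^ 2
            + 2 * ((X.mulVec γ i - Xp.mulVec βp i) * r i)) := by
      apply Finset.sum_congr rfl
      intro i _
      rw [hr]
      ring
    rw [this, Finset.sum_add_distrib, Finset.sum_add_distrib, ← Finset.mul_sum, hc]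
    ring
  intro β hβ
  constructor
  · intro h γ hγ
    have := h γ hγ
    rw [decomp β hβ, decomp γ hγ] at this
    linarith
  · intro h γ hγ
    have := h γ hγ
    rw [decomp β hβ, decomp γ hγ]
    linarith
end

section
/- Let d ≥ 1, 1 ≤ k ≤ d, and c ∈ ℝ. The following two classes of functions on subsets of D = {1,…,d} coincide after centering at the empty set: { S ↦ f(S) − f(∅) : f(S) = Σ_{T ⊆ D, 1 ≤ |T| ≤ k} γ^{|T|}_{|S∩T|}·I_T for some real coefficients (I_T) with Σ_{i ∈ D} I_{{i}} = c } equals { S ↦ Σ_{T ⊆ D, 1 ≤ |T| ≤ k} φ_T·1[T ⊆ S] : (φ_T) real coefficients with Σ_{T ⊆ D, 1 ≤ |T| ≤ k} φ_T = c }. -/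
open Finset


noncomputable def Bb (n : ℕ) : ℝ := ((bernoulli n : ℚ) : ℝ)

lemma sum_Bb (n : ℕ) : ∑ j ∈ Finset.range n, (n.choose j : ℝ) * Bb j
    = if n = 1 then 1 else 0 := by
  have h := sum_bernoulli n
  have : ((∑ k ∈ Finset.range n, (n.choose k : ℚ) * bernoulli k : ℚ) : ℝ)
      = ((if n = 1 then 1 else 0 : ℚ) : ℝ) := by rw [h]
  rw [show ((if n = 1 then 1 else 0 : ℚ) : ℝ) = (if n = 1 then 1 else 0 : ℝ) by
    split <;> simp] at this
  rw [← this]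
  push_cast
  rfl

lemma sum_Bb_conv (m : ℕ) :
    ∑ j ∈ Finset.range (m+1), (m.choose j : ℝ) * (Bb j / ((m - j : ℕ) + 1))
      = if m = 0 then 1 else 0 := by
  have key : ∀ j ∈ Finset.range (m+1),
      (m.choose j : ℝ) * (Bb j / ((m - j : ℕ) + 1))
        = (((m+1).choose j : ℝ) * Bb j) / (m+1) := by
    intro j hj
    have hj' : j ≤ m := by simpa [Nat.lt_succ_iff] using hj
    have hnat : m.choose j * (m + 1) = (m + 1).choose j * (m + 1 - j) :=
      Nat.choose_mul_succ_eq m j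
    have h1 : ((m - j : ℕ) + 1 : ℝ) = ((m + 1 - j : ℕ) : ℝ) := by
      push_cast [Nat.sub_add_comm hj']
      ring
    have h2 : ((m - j : ℕ) + 1 : ℝ) ≠ 0 := by positivity
    have h3 : ((m : ℝ) + 1) ≠ 0 := by positivity
    rw [mul_div_assoc', div_eq_div_iff h2 h3, h1]
    calc (m.choose j : ℝ) * Bb j * ((m:ℝ)+1)
        = Bb j * ((m.choose j * (m+1) : ℕ) : ℝ) := by push_cast; ring
      _ = Bb j * (((m+1).choose j * (m+1-j) : ℕ) : ℝ) := by rw [hnat]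
      _ = ((m+1).choose j : ℝ) * Bb j * ((m+1-j : ℕ) : ℝ) := by push_cast; ring
  rw [Finset.sum_congr rfl key, ← Finset.sum_div]
  have h := sum_Bb (m+1)
  rw [h]
  rcases Nat.eq_zero_or_pos m with hm | hm
  · subst hm; norm_num
  · have : ¬ (m + 1 = 1) := by omega
    have : ¬ (m = 0) := by omega
    simp_all

lemma sum_Bb_rev (t : ℕ) :
    ∑ j ∈ Finset.range (t+1), (t.choose j : ℝ) * Bb (t - j)
      = (if t = 1 then 1 else 0) + Bb t := by
  have := Finset.sum_range_reflect (fun j => (t.choose j : ℝ) * Bb (t - j)) (t+1)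
  rw [← this]
  have : ∀ j ∈ Finset.range (t+1),
      (t.choose (t + 1 - 1 - j) : ℝ) * Bb (t - (t + 1 - 1 - j))
        = (t.choose j : ℝ) * Bb j := by
    intro j hj
    have hj' : j ≤ t := by simpa [Nat.lt_succ_iff] using hj
    have h1 : t + 1 - 1 - j = t - j := by omega
    have h2 : t - (t - j) = j := by omega
    rw [h1, h2, Nat.choose_symm hj']
  rw [Finset.sum_congr rfl this, Finset.sum_range_succ, sum_Bb t]
  simp

/-- The `k_ADD` interaction representation `f(S) = Σ_{T ⊆ D, 1 ≤ |T| ≤ k} γ^{|T|}_{|S∩T|}·I_T`. -/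
noncomputable def kaddFun (d k : ℕ) (I : Finset (Fin d) → ℝ) (S : Finset (Fin d)) : ℝ :=
  ∑ T ∈ (Finset.univ : Finset (Fin d)).powerset.filter (fun T => 1 ≤ T.card ∧ T.card ≤ k),
    gammaCoeff T.card (S ∩ T).card * I T


lemma gammaCoeff_eq_sum_powerset {α : Type*} [DecidableEq α] (t : ℕ) (s : Finset α) :
    gammaCoeff t s.card = ∑ U ∈ s.powerset, Bb (t - U.card) := by
  rw [Finset.sum_powerset_apply_card (fun m => Bb (t - m))]
  unfold gammaCoeff
  simp [nsmul_eq_mul, Bb]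

lemma gammaCoeff_zero (t : ℕ) : gammaCoeff t 0 = Bb t := by
  simp [gammaCoeff, Bb]

lemma gamma_diff {α : Type*} [DecidableEq α] (t : ℕ) (s : Finset α) :
    gammaCoeff t s.card - gammaCoeff t 0
      = ∑ U ∈ s.powerset.filter (fun U => U ≠ ∅), Bb (t - U.card) := by
  rw [gammaCoeff_eq_sum_powerset, gammaCoeff_zero, Finset.filter_ne',
    ← Finset.add_sum_erase _ _ (Finset.empty_mem_powerset s)]
  simp

lemma kadd_core (d k : ℕ) (I : Finset (Fin d) → ℝ) (S : Finset (Fin d)) :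
    kaddFun d k I S - kaddFun d k I ∅
      = ∑ U ∈ ((Finset.univ : Finset (Fin d)).powerset.filter
            (fun T => 1 ≤ T.card ∧ T.card ≤ k)).filter (fun U => U ⊆ S),
          ∑ T ∈ ((Finset.univ : Finset (Fin d)).powerset.filter
            (fun T => 1 ≤ T.card ∧ T.card ≤ k)).filter (fun T => U ⊆ T),
            Bb (T.card - U.card) * I T := by
  unfold kaddFun
  rw [← Finset.sum_sub_distrib]
  have step1 : ∀ T ∈ (Finset.univ : Finset (Fin d)).powerset.filter
      (fun T => 1 ≤ T.card ∧ T.card ≤ k),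
      gammaCoeff T.card (S ∩ T).card * I T - gammaCoeff T.card ((∅ : Finset (Fin d)) ∩ T).card * I T
        = ∑ U ∈ ((S ∩ T).powerset.filter (fun U => U ≠ ∅)), Bb (T.card - U.card) * I T := by
    intro T _
    rw [Finset.empty_inter, show ((∅ : Finset (Fin d)).card) = 0 from rfl, ← sub_mul,
      gamma_diff, Finset.sum_mul]
  rw [Finset.sum_congr rfl step1]
  refine Finset.sum_comm' ?_
  intro T U
  simp only [Finset.mem_filter, Finset.mem_powerset, Finset.subset_inter_iff,
    ← Finset.nonempty_iff_ne_empty, ← Finset.one_le_card]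
  constructor
  · rintro ⟨⟨-, h1, h2⟩, ⟨hUS, hUT⟩, hU1⟩
    exact ⟨⟨⟨Finset.subset_univ T, h1, h2⟩, hUT⟩,
      ⟨Finset.subset_univ U, hU1, le_trans (Finset.card_le_card hUT) h2⟩, hUS⟩
  · rintro ⟨⟨⟨-, h1, h2⟩, hUT⟩, ⟨-, hU1, -⟩, hUS⟩
    exact ⟨⟨Finset.subset_univ T, h1, h2⟩, ⟨hUS, hUT⟩, hU1⟩

lemma sum_ne_empty_Bb {α : Type*} [DecidableEq α] (T : Finset α) :
    ∑ U ∈ T.powerset.filter (fun U => U ≠ ∅), Bb (T.card - U.card)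
      = if T.card = 1 then 1 else 0 := by
  rw [← gamma_diff T.card T, gammaCoeff_zero]
  have h : gammaCoeff T.card T.card = (if T.card = 1 then 1 else 0) + Bb T.card := by
    simpa [gammaCoeff, Bb] using sum_Bb_rev T.card
  rw [h]; ring

lemma filter_card_one (d k : ℕ) (hk1 : 1 ≤ k) :
    ((Finset.univ : Finset (Fin d)).powerset.filter
        (fun T => 1 ≤ T.card ∧ T.card ≤ k)).filter (fun T => T.card = 1)
      = Finset.univ.image (fun i => ({i} : Finset (Fin d))) := by
  ext T
  simp only [Finset.mem_filter, Finset.mem_powerset, Finset.mem_image, Finset.mem_univ, true_and]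
  constructor
  · rintro ⟨-, h⟩
    rcases Finset.card_eq_one.mp h with ⟨a, rfl⟩
    exact ⟨a, rfl⟩
  · rintro ⟨a, rfl⟩
    refine ⟨⟨Finset.subset_univ _, ?_, ?_⟩, ?_⟩ <;> simp [hk1]

lemma dir1_constraint (d k : ℕ) (hk1 : 1 ≤ k) (I : Finset (Fin d) → ℝ) :
    ∑ U ∈ (Finset.univ : Finset (Fin d)).powerset.filter
        (fun T => 1 ≤ T.card ∧ T.card ≤ k),
      ∑ T ∈ ((Finset.univ : Finset (Fin d)).powerset.filter
        (fun T => 1 ≤ T.card ∧ T.card ≤ k)).filter (fun T => U ⊆ T),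
        Bb (T.card - U.card) * I T
      = ∑ i : Fin d, I {i} := by
  rw [Finset.sum_comm'
    (t' := (Finset.univ : Finset (Fin d)).powerset.filter (fun T => 1 ≤ T.card ∧ T.card ≤ k))
    (s' := fun T => T.powerset.filter (fun U => U ≠ ∅))
    (by
      intro U T
      simp only [Finset.mem_filter, Finset.mem_powerset,
        ← Finset.nonempty_iff_ne_empty, ← Finset.one_le_card]
      constructor
      · rintro ⟨⟨-, hU1, -⟩, ⟨-, hT1, hTk⟩, hUT⟩
        exact ⟨⟨hUT, hU1⟩, Finset.subset_univ T, hT1, hTk⟩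
      · rintro ⟨⟨hUT, hU1⟩, -, hT1, hTk⟩
        exact ⟨⟨Finset.subset_univ U, hU1, le_trans (Finset.card_le_card hUT) hTk⟩,
          ⟨Finset.subset_univ T, hT1, hTk⟩, hUT⟩)]
  have step : ∀ T ∈ (Finset.univ : Finset (Fin d)).powerset.filter
      (fun T => 1 ≤ T.card ∧ T.card ≤ k),
      ∑ U ∈ T.powerset.filter (fun U => U ≠ ∅), Bb (T.card - U.card) * I T
        = if T.card = 1 then I T else 0 := by
    intro T _
    rw [← Finset.sum_mul, sum_ne_empty_Bb]
    split <;> simp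
  rw [Finset.sum_congr rfl step, ← Finset.sum_filter, filter_card_one d k hk1,
    Finset.sum_image (by intro a _ b _ h; exact Finset.singleton_injective h)]

lemma dir2_constraint (d k : ℕ) (φ : Finset (Fin d) → ℝ) :
    ∑ i : Fin d,
      ∑ U ∈ ((Finset.univ : Finset (Fin d)).powerset.filter
          (fun T => 1 ≤ T.card ∧ T.card ≤ k)).filter
          (fun U => ({i} : Finset (Fin d)) ⊆ U),
        φ U / (((U.card - ({i} : Finset (Fin d)).card : ℕ) : ℝ) + 1)
      = ∑ U ∈ (Finset.univ : Finset (Fin d)).powerset.filter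
          (fun T => 1 ≤ T.card ∧ T.card ≤ k), φ U := by
  rw [Finset.sum_comm'
    (t' := (Finset.univ : Finset (Fin d)).powerset.filter (fun T => 1 ≤ T.card ∧ T.card ≤ k))
    (s' := fun U => U)
    (by
      intro i U
      simp only [Finset.mem_filter, Finset.mem_powerset, Finset.mem_univ, true_and,
        Finset.singleton_subset_iff]
      tauto)]
  refine Finset.sum_congr rfl ?_
  intro U hU
  have hU1 : 1 ≤ U.card := ((Finset.mem_filter.mp hU).2).1
  have hcard : ∀ i : Fin d, ((U.card - ({i} : Finset (Fin d)).card : ℕ) : ℝ) + 1 = (U.card : ℝ) := by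
    intro i
    rw [Finset.card_singleton]
    rw [show ((U.card - 1 : ℕ) : ℝ) + 1 = (((U.card - 1) + 1 : ℕ) : ℝ) by push_cast; ring]
    congr 1
    omega
  rw [Finset.sum_congr rfl (fun i _ => by rw [hcard i]), Finset.sum_const, nsmul_eq_mul,
    mul_div_cancel₀]
  have : (0 : ℝ) < (U.card : ℝ) := by exact_mod_cast hU1
  exact ne_of_gt this

lemma conv_inverse (d k : ℕ) (φ : Finset (Fin d) → ℝ) (U : Finset (Fin d))
    (hU : U ∈ (Finset.univ : Finset (Fin d)).powerset.filter
        (fun T => 1 ≤ T.card ∧ T.card ≤ k)) :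
    ∑ T ∈ ((Finset.univ : Finset (Fin d)).powerset.filter
        (fun T => 1 ≤ T.card ∧ T.card ≤ k)).filter (fun T => U ⊆ T),
      Bb (T.card - U.card) *
        ∑ W ∈ ((Finset.univ : Finset (Fin d)).powerset.filter
            (fun T => 1 ≤ T.card ∧ T.card ≤ k)).filter (fun W => T ⊆ W),
          φ W / (((W.card - T.card : ℕ) : ℝ) + 1)
      = φ U := by
  obtain ⟨-, hU1, hUk⟩ := Finset.mem_filter.mp hU
  have hswap :
      ∑ T ∈ ((Finset.univ : Finset (Fin d)).powerset.filter
          (fun T => 1 ≤ T.card ∧ T.card ≤ k)).filter (fun T => U ⊆ T),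
        ∑ W ∈ ((Finset.univ : Finset (Fin d)).powerset.filter
            (fun T => 1 ≤ T.card ∧ T.card ≤ k)).filter (fun W => T ⊆ W),
          Bb (T.card - U.card) * (φ W / (((W.card - T.card : ℕ) : ℝ) + 1))
        = ∑ W ∈ ((Finset.univ : Finset (Fin d)).powerset.filter
            (fun T => 1 ≤ T.card ∧ T.card ≤ k)).filter (fun W => U ⊆ W),
          ∑ T ∈ ((Finset.univ : Finset (Fin d)).powerset.filter
            (fun T => 1 ≤ T.card ∧ T.card ≤ k)).filter (fun T => U ⊆ T ∧ T ⊆ W),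
            Bb (T.card - U.card) * (φ W / (((W.card - T.card : ℕ) : ℝ) + 1)) := by
    refine Finset.sum_comm' ?_
    intro T W
    simp only [Finset.mem_filter, Finset.mem_powerset]
    constructor
    · rintro ⟨⟨⟨-, hT1, hTk⟩, hUT⟩, ⟨-, hW1, hWk⟩, hTW⟩
      exact ⟨⟨⟨Finset.subset_univ T, hT1, hTk⟩, hUT, hTW⟩,
        ⟨Finset.subset_univ W, hW1, hWk⟩, hUT.trans hTW⟩
    · rintro ⟨⟨⟨-, hT1, hTk⟩, hUT, hTW⟩, ⟨-, hW1, hWk⟩, -⟩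
      exact ⟨⟨⟨Finset.subset_univ T, hT1, hTk⟩, hUT⟩,
        ⟨Finset.subset_univ W, hW1, hWk⟩, hTW⟩
  have hmulsum : ∀ T, Bb (T.card - U.card) *
        (∑ W ∈ ((Finset.univ : Finset (Fin d)).powerset.filter
            (fun T => 1 ≤ T.card ∧ T.card ≤ k)).filter (fun W => T ⊆ W),
          φ W / (((W.card - T.card : ℕ) : ℝ) + 1))
      = ∑ W ∈ ((Finset.univ : Finset (Fin d)).powerset.filter
            (fun T => 1 ≤ T.card ∧ T.card ≤ k)).filter (fun W => T ⊆ W),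
          Bb (T.card - U.card) * (φ W / (((W.card - T.card : ℕ) : ℝ) + 1)) := by
    intro T; rw [Finset.mul_sum]
  rw [Finset.sum_congr rfl (fun T _ => hmulsum T), hswap]
  have hinner : ∀ W ∈ ((Finset.univ : Finset (Fin d)).powerset.filter
      (fun T => 1 ≤ T.card ∧ T.card ≤ k)).filter (fun W => U ⊆ W),
      ∑ T ∈ ((Finset.univ : Finset (Fin d)).powerset.filter
          (fun T => 1 ≤ T.card ∧ T.card ≤ k)).filter (fun T => U ⊆ T ∧ T ⊆ W),
        Bb (T.card - U.card) * (φ W / (((W.card - T.card : ℕ) : ℝ) + 1))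
        = if W = U then φ W else 0 := by
    intro W hW
    obtain ⟨hWF, hUW⟩ := Finset.mem_filter.mp hW
    obtain ⟨-, hW1, hWk⟩ := Finset.mem_filter.mp hWF
    have hreindex :
        ∑ T ∈ ((Finset.univ : Finset (Fin d)).powerset.filter
            (fun T => 1 ≤ T.card ∧ T.card ≤ k)).filter (fun T => U ⊆ T ∧ T ⊆ W),
          Bb (T.card - U.card) * (φ W / (((W.card - T.card : ℕ) : ℝ) + 1))
        = ∑ V ∈ (W \ U).powerset,
            Bb V.card * (φ W / ((((W \ U).card - V.card : ℕ) : ℝ) + 1)) := by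
      refine Finset.sum_nbij' (i := fun T => T \ U) (j := fun V => U ∪ V) ?_ ?_ ?_ ?_ ?_
      · intro T hT
        obtain ⟨-, hUT, hTW⟩ := Finset.mem_filter.mp hT
        exact Finset.mem_powerset.mpr (Finset.sdiff_subset_sdiff hTW Finset.Subset.rfl)
      · intro V hV
        have hV' := Finset.mem_powerset.mp hV
        have hsub : U ∪ V ⊆ W := Finset.union_subset hUW (hV'.trans (Finset.sdiff_subset))
        refine Finset.mem_filter.mpr ⟨Finset.mem_filter.mpr ⟨Finset.mem_powerset.mpr
          (Finset.subset_univ _), ?_, ?_⟩, Finset.subset_union_left, hsub⟩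
        · exact le_trans hU1 (Finset.card_le_card Finset.subset_union_left)
        · exact le_trans (Finset.card_le_card hsub) hWk
      · intro T hT
        obtain ⟨-, hUT, hTW⟩ := Finset.mem_filter.mp hT
        exact Finset.union_sdiff_of_subset hUT
      · intro V hV
        have hV' := Finset.mem_powerset.mp hV
        have hdisj : Disjoint U V :=
          Finset.disjoint_of_subset_right hV' Finset.disjoint_sdiff
        show (U ∪ V) \ U = V
        rw [Finset.union_sdiff_cancel_left hdisj]
      · intro T hT
        obtain ⟨-, hUT, hTW⟩ := Finset.mem_filter.mp hT
        have h1 : (T \ U).card = T.card - U.card := Finset.card_sdiff_of_subset hUT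
        have h2 : (W \ U).card = W.card - U.card := Finset.card_sdiff_of_subset hUW
        have hUT' := Finset.card_le_card hUT
        have hTW' := Finset.card_le_card hTW
        rw [h1, h2, show W.card - T.card = (W.card - U.card) - (T.card - U.card) by omega]
    rw [hreindex, Finset.sum_powerset_apply_card
      (fun m => Bb m * (φ W / ((((W \ U).card - m : ℕ) : ℝ) + 1)))]
    have hfin : ∑ j ∈ Finset.range ((W \ U).card + 1),
        ((W \ U).card.choose j) • (Bb j * (φ W / ((((W \ U).card - j : ℕ) : ℝ) + 1)))
        = (if (W \ U).card = 0 then 1 else 0) * φ W := by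
      rw [← sum_Bb_conv ((W \ U).card), Finset.sum_mul]
      refine Finset.sum_congr rfl ?_
      intro j _
      rw [nsmul_eq_mul]
      ring
    rw [hfin]
    have hiff : (W \ U).card = 0 ↔ W = U := by
      rw [Finset.card_eq_zero, Finset.sdiff_eq_empty_iff_subset]
      exact ⟨fun h => Finset.Subset.antisymm h hUW, fun h => h ▸ Finset.Subset.rfl⟩
    by_cases h : W = U
    · rw [if_pos (hiff.mpr h), if_pos h, one_mul]
    · rw [if_neg (fun hh => h (hiff.mp hh)), if_neg h, zero_mul]
  rw [Finset.sum_congr rfl hinner, Finset.sum_ite_eq' _ U φ]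
  rw [if_pos]
  exact Finset.mem_filter.mpr ⟨hU, Finset.Subset.rfl⟩

lemma filter_sets_eq (d k : ℕ) (S : Finset (Fin d)) :
    ((Finset.univ : Finset (Fin d)).powerset.filter
        (fun T => 1 ≤ T.card ∧ T.card ≤ k)).filter (fun T => T ⊆ S)
      = (Finset.univ : Finset (Fin d)).powerset.filter
        (fun T => 1 ≤ T.card ∧ T.card ≤ k ∧ T ⊆ S) := by
  ext T
  simp only [Finset.mem_filter]
  tauto

/-- The class of centered `k_ADD` interaction representations with singleton coefficients summing
to `c` coincides with the class of games whose Möbius coefficients are supported on nonempty sets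
of size at most `k` and sum to `c`. -/
theorem kadd_class_eq_moebius_class
    (d k : ℕ) (hd : 1 ≤ d) (hk1 : 1 ≤ k) (hkd : k ≤ d) (c : ℝ) :
    {g : Finset (Fin d) → ℝ |
      ∃ I : Finset (Fin d) → ℝ,
        (∑ i : Fin d, I {i}) = c ∧
        g = fun S => kaddFun d k I S - kaddFun d k I ∅} =
    {g : Finset (Fin d) → ℝ |
      ∃ φ : Finset (Fin d) → ℝ,
        (∑ T ∈ (Finset.univ : Finset (Fin d)).powerset.filter
            (fun T => 1 ≤ T.card ∧ T.card ≤ k), φ T) = c ∧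
        g = fun S => ∑ T ∈ (Finset.univ : Finset (Fin d)).powerset.filter
            (fun T => 1 ≤ T.card ∧ T.card ≤ k ∧ T ⊆ S), φ T} := by
  ext g
  simp only [Set.mem_setOf_eq]
  constructor
  · rintro ⟨I, hI, rfl⟩
    refine ⟨fun U => ∑ T ∈ ((Finset.univ : Finset (Fin d)).powerset.filter
        (fun T => 1 ≤ T.card ∧ T.card ≤ k)).filter (fun T => U ⊆ T),
        Bb (T.card - U.card) * I T, ?_, ?_⟩
    · rw [dir1_constraint d k hk1 I]; exact hI
    · funext S
      rw [kadd_core d k I S, ← filter_sets_eq d k S]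
  · rintro ⟨φ, hφ, rfl⟩
    refine ⟨fun T => ∑ U ∈ ((Finset.univ : Finset (Fin d)).powerset.filter
        (fun T => 1 ≤ T.card ∧ T.card ≤ k)).filter (fun U => T ⊆ U),
        φ U / (((U.card - T.card : ℕ) : ℝ) + 1), ?_, ?_⟩
    · exact (dir2_constraint d k φ).trans hφ
    · funext S
      rw [kadd_core d k _ S, ← filter_sets_eq d k S]
      refine (Finset.sum_congr rfl ?_).symm
      intro U hU
      exact conv_inverse d k φ U (Finset.mem_filter.mp hU).1
end

section
/- Let d ≥ 1, let ν : 2^D → ℝ be a cooperative game on D = {1,…,d}, and let 1 ≤ k ≤ d. Then the Shapley interaction index of ν vanishes on all subsets of size greater than k if and only if the Möbius transform of ν vanishes on all subsets of size greater than k; i.e., (∀ S ⊆ D with |S| > k, I_Sh(S) = 0) ⟺ (∀ S ⊆ D with |S| > k, m(S) = 0). -/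
open Finset

private lemma swap_pow {α : Type*} [DecidableEq α] (A : Finset α) (f : Finset α → Finset α → ℝ) :
    ∑ T ∈ A.powerset, ∑ W ∈ T.powerset, f T W
      = ∑ W ∈ A.powerset, ∑ U ∈ (A \ W).powerset, f (W ∪ U) W := by
  rw [Finset.sum_sigma', Finset.sum_sigma']
  refine Finset.sum_nbij' (fun p => ⟨p.2, p.1 \ p.2⟩) (fun p => ⟨p.1 ∪ p.2, p.1⟩)
    ?_ ?_ ?_ ?_ ?_
  · rintro ⟨T, W⟩ hp
    simp only [Finset.mem_sigma, Finset.mem_powerset] at hp ⊢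
    exact ⟨hp.2.trans hp.1, sdiff_subset_sdiff hp.1 le_rfl⟩
  · rintro ⟨W, U⟩ hp
    simp only [Finset.mem_sigma, Finset.mem_powerset] at hp ⊢
    exact ⟨Finset.union_subset hp.1 (hp.2.trans sdiff_subset), Finset.subset_union_left⟩
  · rintro ⟨T, W⟩ hp
    simp only [Finset.mem_sigma, Finset.mem_powerset] at hp
    simp [Finset.union_sdiff_of_subset hp.2]
  · rintro ⟨W, U⟩ hp
    simp only [Finset.mem_sigma, Finset.mem_powerset] at hp
    have hd : Disjoint W U := Finset.disjoint_of_subset_right hp.2 sdiff_disjoint.symm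
    simp [Finset.union_sdiff_cancel_left hd]
  · rintro ⟨T, W⟩ hp
    simp only [Finset.mem_sigma, Finset.mem_powerset] at hp
    simp [Finset.union_sdiff_of_subset hp.2]

private lemma sum_union_pow {α : Type*} [DecidableEq α] {s t : Finset α} (h : Disjoint s t)
    (f : Finset α → ℝ) :
    ∑ B ∈ (s ∪ t).powerset, f B = ∑ P ∈ s.powerset, ∑ Q ∈ t.powerset, f (P ∪ Q) := by
  rw [Finset.sum_sigma']
  refine (Finset.sum_nbij' (fun p => p.1 ∪ p.2) (fun B => ⟨B ∩ s, B ∩ t⟩) ?_ ?_ ?_ ?_ ?_).symm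
  · rintro ⟨P, Q⟩ hp
    simp only [Finset.mem_sigma, Finset.mem_powerset] at hp ⊢
    exact Finset.union_subset_union hp.1 hp.2
  · intro B hB
    simp only [Finset.mem_powerset] at hB
    simp only [Finset.mem_sigma, Finset.mem_powerset]
    exact ⟨Finset.inter_subset_right, Finset.inter_subset_right⟩
  · rintro ⟨P, Q⟩ hp
    simp only [Finset.mem_sigma, Finset.mem_powerset] at hp
    have h1 : (P ∪ Q) ∩ s = P := by
      rw [Finset.union_inter_distrib_right, (Finset.inter_eq_left).2 hp.1,
        Finset.disjoint_iff_inter_eq_empty.1 (Finset.disjoint_of_subset_left hp.2 h.symm) ,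
        Finset.union_empty]
    have h2 : (P ∪ Q) ∩ t = Q := by
      rw [Finset.union_inter_distrib_right, (Finset.inter_eq_left).2 hp.2,
        Finset.disjoint_iff_inter_eq_empty.1 (Finset.disjoint_of_subset_left hp.1 h),
        Finset.empty_union]
    simp [h1, h2]
  · intro B hB
    simp only [Finset.mem_powerset] at hB
    simp only [← Finset.inter_union_distrib_left]
    exact Finset.inter_eq_left.2 hB
  · rintro ⟨P, Q⟩ hp; rfl

private lemma alt_sum {α : Type*} [DecidableEq α] (x : Finset α) :
    ∑ m ∈ x.powerset, (-1 : ℝ) ^ m.card = if x = ∅ then 1 else 0 := by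
  have := Finset.sum_powerset_neg_one_pow_card (x := x)
  have h2 : ((∑ m ∈ x.powerset, (-1 : ℤ) ^ m.card : ℤ) : ℝ)
      = ∑ m ∈ x.powerset, (-1 : ℝ) ^ m.card := by push_cast; rfl
  rw [← h2, this]; split <;> norm_num
private lemma coeff_sum (n b : ℕ) (hb : b ≤ n) :
    ∑ u ∈ Finset.range (n - b + 1),
      (((n - b).choose u : ℕ) : ℝ) * (1 / (((n + 1 : ℕ) : ℝ) * ((n.choose (b + u) : ℕ) : ℝ)))
      = 1 / ((b : ℝ) + 1) := by
  have key : ∀ u ∈ Finset.range (n - b + 1),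
      (((n - b).choose u : ℕ) : ℝ) * (1 / (((n + 1 : ℕ) : ℝ) * ((n.choose (b + u) : ℕ) : ℝ)))
      = (((u + b).choose b : ℕ) : ℝ) * (1 / (((n + 1 : ℕ) : ℝ) * ((n.choose b : ℕ) : ℝ))) := by
    intro u hu
    have hu' : u ≤ n - b := by simpa [Nat.lt_succ_iff] using hu
    have h1 : b + u ≤ n := by omega
    have hid : n.choose (b + u) * (b + u).choose b = n.choose b * (n - b).choose u := by
      have := Nat.choose_mul (n := n) (Nat.le_add_right b u)
      simpa using this
    have hc1 : ((n.choose (b + u) : ℕ) : ℝ) ≠ 0 :=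
      Nat.cast_ne_zero.2 (Nat.choose_pos h1).ne'
    have hc2 : ((n.choose b : ℕ) : ℝ) ≠ 0 := Nat.cast_ne_zero.2 (Nat.choose_pos hb).ne'
    have hn1 : ((n + 1 : ℕ) : ℝ) ≠ 0 := by positivity
    have hidR : ((n.choose (b + u) : ℕ) : ℝ) * (((b + u).choose b : ℕ) : ℝ)
        = ((n.choose b : ℕ) : ℝ) * (((n - b).choose u : ℕ) : ℝ) := by exact_mod_cast congrArg (Nat.cast (R := ℝ)) hid
    field_simp
    rw [Nat.add_comm u b]
    linear_combination hidR.symm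
  rw [Finset.sum_congr rfl key, ← Finset.sum_mul]
  have hs : ∑ u ∈ Finset.range (n - b + 1), (((u + b).choose b : ℕ) : ℝ)
      = (((n + 1).choose (b + 1) : ℕ) : ℝ) := by
    rw [← Nat.cast_sum]
    norm_cast
    rw [Nat.sum_range_add_choose (n - b) b]
    congr 1
    omega
  rw [hs]
  have hmul : (n + 1) * n.choose b = (n + 1).choose (b + 1) * (b + 1) := by
    simpa using Nat.add_one_mul_choose_eq n b
  have hc3 : (((n + 1).choose (b + 1) : ℕ) : ℝ) ≠ 0 :=
    Nat.cast_ne_zero.2 (Nat.choose_pos (by omega)).ne'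
  have hc2 : ((n.choose b : ℕ) : ℝ) ≠ 0 := Nat.cast_ne_zero.2 (Nat.choose_pos hb).ne'
  have hmulR : ((n : ℝ) + 1) * (n.choose b : ℝ) = ((n + 1).choose (b + 1) : ℝ) * ((b : ℝ) + 1) := by
    exact_mod_cast congrArg (Nat.cast (R := ℝ)) hmul
  push_cast
  field_simp
  linarith [hmulR]

private lemma alt_sum_eq (d : ℕ) (ν : Finset (Fin d) → ℝ) (S T : Finset (Fin d))
    (hST : Disjoint S T) :
    ∑ L ∈ S.powerset, (-1 : ℝ) ^ (S.card - L.card) * ν (T ∪ L)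
      = ∑ W ∈ T.powerset, moebius d ν (S ∪ W) := by
  have main : ∀ W ∈ T.powerset, moebius d ν (S ∪ W)
      = ∑ Q ∈ W.powerset, (-1:ℝ) ^ (W.card - Q.card) *
          ∑ P ∈ S.powerset, (-1:ℝ) ^ (S.card - P.card) * ν (P ∪ Q) := by
    intro W hW
    rw [Finset.mem_powerset] at hW
    have hSW : Disjoint S W := hST.mono_right hW
    unfold moebius
    rw [sum_union_pow hSW]
    rw [Finset.sum_comm]
    refine Finset.sum_congr rfl fun Q hQ => ?_
    rw [Finset.mem_powerset] at hQ
    rw [Finset.mul_sum]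
    refine Finset.sum_congr rfl fun P hP => ?_
    rw [Finset.mem_powerset] at hP
    have hPQ : Disjoint P Q := (hSW.mono hP hQ)
    have hc1 : (S ∪ W).card = S.card + W.card := Finset.card_union_of_disjoint hSW
    have hc2 : (P ∪ Q).card = P.card + Q.card := Finset.card_union_of_disjoint hPQ
    have hcp : P.card ≤ S.card := Finset.card_le_card hP
    have hcq : Q.card ≤ W.card := Finset.card_le_card hQ
    have he : (S ∪ W).card - (P ∪ Q).card = (W.card - Q.card) + (S.card - P.card) := by
      rw [hc1, hc2]; omega
    rw [he, pow_add, mul_assoc]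
  rw [Finset.sum_congr rfl main, swap_pow]
  have step : ∀ Q ∈ T.powerset,
      ∑ U ∈ (T \ Q).powerset, (-1:ℝ) ^ ((Q ∪ U).card - Q.card) *
          ∑ P ∈ S.powerset, (-1:ℝ) ^ (S.card - P.card) * ν (P ∪ Q)
        = if Q = T then ∑ P ∈ S.powerset, (-1:ℝ) ^ (S.card - P.card) * ν (P ∪ Q) else 0 := by
    intro Q hQ
    rw [Finset.mem_powerset] at hQ
    have h1 : ∀ U ∈ (T \ Q).powerset,
        (-1:ℝ) ^ ((Q ∪ U).card - Q.card) *
            ∑ P ∈ S.powerset, (-1:ℝ) ^ (S.card - P.card) * ν (P ∪ Q)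
          = (-1:ℝ) ^ U.card * ∑ P ∈ S.powerset, (-1:ℝ) ^ (S.card - P.card) * ν (P ∪ Q) := by
      intro U hU
      rw [Finset.mem_powerset] at hU
      have hd : Disjoint Q U := Finset.disjoint_of_subset_right hU Finset.sdiff_disjoint.symm
      rw [Finset.card_union_of_disjoint hd, Nat.add_sub_cancel_left]
    rw [Finset.sum_congr rfl h1, ← Finset.sum_mul, alt_sum]
    by_cases hc : Q = T
    · simp [hc]
    · have hne : ¬(T \ Q = ∅) := by
        rw [Finset.sdiff_eq_empty_iff_subset]
        exact fun h => hc (subset_antisymm hQ h)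
      simp [hc, hne]
  rw [Finset.sum_congr rfl step, Finset.sum_ite_eq' T.powerset T]
  simp [Finset.union_comm]

/-- Shapley interaction index
`I_Sh(S) = Σ_{T ⊆ D∖S} [1/((d−|S|+1)·C(d−|S|,|T|))]·Σ_{L ⊆ S} (−1)^{|S|−|L|}·ν(T∪L)`. -/
noncomputable def shapleyInteraction (d : ℕ) (ν : Finset (Fin d) → ℝ)
    (S : Finset (Fin d)) : ℝ :=
  ∑ T ∈ ((Finset.univ : Finset (Fin d)) \ S).powerset,
    (1 / (((d - S.card + 1 : ℕ) : ℝ) * (((d - S.card).choose T.card : ℕ) : ℝ))) *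
      ∑ L ∈ S.powerset, (-1 : ℝ) ^ (S.card - L.card) * ν (T ∪ L)

private lemma shapley_eq (d : ℕ) (ν : Finset (Fin d) → ℝ) (S : Finset (Fin d)) :
    shapleyInteraction d ν S
      = ∑ W ∈ ((Finset.univ : Finset (Fin d)) \ S).powerset,
          moebius d ν (S ∪ W) * (1 / ((W.card : ℝ) + 1)) := by
  unfold shapleyInteraction
  have hstep1 : ∀ T ∈ ((Finset.univ : Finset (Fin d)) \ S).powerset,
      (1 / (((d - S.card + 1 : ℕ) : ℝ) * (((d - S.card).choose T.card : ℕ) : ℝ))) *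
        ∑ L ∈ S.powerset, (-1 : ℝ) ^ (S.card - L.card) * ν (T ∪ L)
      = ∑ W ∈ T.powerset,
          (1 / (((d - S.card + 1 : ℕ) : ℝ) * (((d - S.card).choose T.card : ℕ) : ℝ))) *
            moebius d ν (S ∪ W) := by
    intro T hT
    rw [Finset.mem_powerset] at hT
    have hd : Disjoint S T :=
      (Finset.disjoint_of_subset_left hT Finset.sdiff_disjoint).symm
    rw [alt_sum_eq d ν S T hd, Finset.mul_sum]
  rw [Finset.sum_congr rfl hstep1, swap_pow]
  refine Finset.sum_congr rfl fun W hW => ?_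
  rw [Finset.mem_powerset] at hW
  have hscn : ((Finset.univ : Finset (Fin d)) \ S).card = d - S.card := by
    rw [Finset.card_sdiff_of_subset (Finset.subset_univ S), Finset.card_univ, Fintype.card_fin]
  have hb : W.card ≤ d - S.card := hscn ▸ Finset.card_le_card hW
  have hxcard : (((Finset.univ : Finset (Fin d)) \ S) \ W).card = d - S.card - W.card := by
    rw [Finset.card_sdiff_of_subset hW, hscn]
  calc ∑ U ∈ ((((Finset.univ : Finset (Fin d)) \ S) \ W)).powerset,
        (1 / (((d - S.card + 1 : ℕ) : ℝ) * (((d - S.card).choose ((W ∪ U).card) : ℕ) : ℝ))) *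
          moebius d ν (S ∪ W)
      = ∑ U ∈ ((((Finset.univ : Finset (Fin d)) \ S) \ W)).powerset,
        (fun u => (1 / (((d - S.card + 1 : ℕ) : ℝ) *
            (((d - S.card).choose (W.card + u) : ℕ) : ℝ))) * moebius d ν (S ∪ W)) U.card := by
        refine Finset.sum_congr rfl fun U hU => ?_
        rw [Finset.mem_powerset] at hU
        have hdWU : Disjoint W U :=
          Finset.disjoint_of_subset_right hU Finset.sdiff_disjoint.symm
        simp only [Finset.card_union_of_disjoint hdWU]
    _ = ∑ u ∈ Finset.range ((((Finset.univ : Finset (Fin d)) \ S) \ W).card + 1),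
          ((((Finset.univ : Finset (Fin d)) \ S) \ W).card.choose u) •
            ((1 / (((d - S.card + 1 : ℕ) : ℝ) *
              (((d - S.card).choose (W.card + u) : ℕ) : ℝ))) * moebius d ν (S ∪ W)) := by
        exact Finset.sum_powerset_apply_card
          (fun u => (1 / (((d - S.card + 1 : ℕ) : ℝ) *
            (((d - S.card).choose (W.card + u) : ℕ) : ℝ))) * moebius d ν (S ∪ W))
    _ = ∑ u ∈ Finset.range (d - S.card - W.card + 1),
          (((d - S.card - W.card).choose u : ℕ) : ℝ) *
            ((1 / (((d - S.card + 1 : ℕ) : ℝ) *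
              (((d - S.card).choose (W.card + u) : ℕ) : ℝ))) * moebius d ν (S ∪ W)) := by
        rw [hxcard]
        refine Finset.sum_congr rfl fun u hu => ?_
        rw [nsmul_eq_mul]
    _ = (∑ u ∈ Finset.range (d - S.card - W.card + 1),
          (((d - S.card - W.card).choose u : ℕ) : ℝ) *
            (1 / (((d - S.card + 1 : ℕ) : ℝ) *
              (((d - S.card).choose (W.card + u) : ℕ) : ℝ)))) * moebius d ν (S ∪ W) := by
        rw [Finset.sum_mul]
        exact Finset.sum_congr rfl fun u hu => by ring
    _ = moebius d ν (S ∪ W) * (1 / ((W.card : ℝ) + 1)) := by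
        rw [coeff_sum (d - S.card) W.card hb, mul_comm]

/-- The Shapley interaction index of `ν` vanishes on all subsets of size greater than `k`
iff the Möbius transform of `ν` vanishes on all subsets of size greater than `k`. -/
theorem shapleyInteraction_vanishes_iff_moebius_vanishes
    (d k : ℕ) (hd : 1 ≤ d) (hk1 : 1 ≤ k) (hkd : k ≤ d)
    (ν : Finset (Fin d) → ℝ) :
    (∀ S : Finset (Fin d), k < S.card → shapleyInteraction d ν S = 0) ↔
      (∀ S : Finset (Fin d), k < S.card → moebius d ν S = 0) := by
  constructor
  · intro hI
    have key : ∀ n, ∀ S : Finset (Fin d), d - S.card < n → k < S.card →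
        moebius d ν S = 0 := by
      intro n
      induction n with
      | zero => exact fun S h => absurd h (Nat.not_lt_zero _)
      | succ n ih =>
        intro S hSn hSk
        have h0 := hI S hSk
        rw [shapley_eq] at h0
        have hzero : ∀ W ∈ ((Finset.univ : Finset (Fin d)) \ S).powerset, W ≠ ∅ →
            moebius d ν (S ∪ W) * (1 / ((W.card : ℝ) + 1)) = 0 := by
          intro W hW hWne
          rw [Finset.mem_powerset] at hW
          have hdisj : Disjoint S W :=
            (Finset.disjoint_of_subset_left hW Finset.sdiff_disjoint).symm
          have hcu : (S ∪ W).card = S.card + W.card := Finset.card_union_of_disjoint hdisj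
          have hW1 : 1 ≤ W.card := Finset.card_pos.2 (Finset.nonempty_iff_ne_empty.2 hWne)
          have hle : (S ∪ W).card ≤ d := by
            have := Finset.card_le_univ (S ∪ W)
            simpa [Finset.card_univ] using this
          have hm0 : moebius d ν (S ∪ W) = 0 := ih (S ∪ W) (by omega) (by omega)
          rw [hm0, zero_mul]
        rw [Finset.sum_eq_single_of_mem (∅ : Finset (Fin d))
          (Finset.empty_mem_powerset _) hzero] at h0
        simpa using h0
    intro S hS
    exact key (d - S.card + 1) S (by omega) hS
  · intro hm S hSk
    rw [shapley_eq]
    refine Finset.sum_eq_zero fun W hW => ?_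
    have hlt : k < (S ∪ W).card :=
      lt_of_lt_of_le hSk (Finset.card_le_card Finset.subset_union_left)
    rw [hm _ hlt, zero_mul]
end

section
/- Let d ≥ 1 and let (S_1,w_1),…,(S_{2r},w_{2r}) be a paired weighted sample on D = {1,…,d}. Define u ∈ ℝ^d by u_i = (1/d_2)·Σ_{T ⊆ D, 1 ≤ |T| ≤ 2} [X̃_1ᵀ X̃_{≤2}]_{i,T} − (1/d)·Σ_{j ∈ D} [X̃_1ᵀ X̃_1]_{i,j}. Then for every i ∈ D, u_i = (1/(2d(d+1)))·Σ_{ℓ=1}^{2r} w_ℓ·|S_ℓ|·(|S_ℓ| − d); in particular u is a scalar multiple of the all-ones vector, so P_d u = 0. -/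
open Finset Matrix

/-- `P_p = I − (1/p)·𝟙𝟙ᵀ`, the orthogonal projection off the all-ones vector. -/
noncomputable def projOnes (p : ℕ) : Matrix (Fin p) (Fin p) ℝ :=
  1 - (p : ℝ)⁻¹ • Matrix.of (fun _ _ => (1 : ℝ))

lemma choose_triangle (n : ℕ) : (n.choose 1 + n.choose 2) * 2 = n * (n + 1) := by
  induction n with
  | zero => simp
  | succ k ih =>
    simp only [Nat.choose_succ_succ, Nat.choose_zero_right, Nat.choose_one_right] at *
    nlinarith [ih]

lemma choose_triangle_real (n : ℕ) :
    ((n.choose 1 + n.choose 2 : ℕ) : ℝ) = (n : ℝ) * ((n : ℝ) + 1) / 2 := by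
  have h' : (((n.choose 1 + n.choose 2) * 2 : ℕ) : ℝ) = ((n * (n + 1) : ℕ) : ℝ) := by
    exact_mod_cast congrArg (Nat.cast : ℕ → ℝ) (choose_triangle n)
  push_cast at h' ⊢
  linarith

lemma count_small_subsets (d : ℕ) (A : Finset (Fin d)) :
    ∑ T : {T : Finset (Fin d) // T.Nonempty ∧ T.card ≤ 2},
      (if (T : Finset (Fin d)) ⊆ A then (1:ℝ) else 0) =
    ((A.card.choose 1 + A.card.choose 2 : ℕ) : ℝ) := by
  rw [← Finset.sum_subtype (Finset.univ.filter (fun T : Finset (Fin d) => T.Nonempty ∧ T.card ≤ 2))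
    (by simp) (fun T => if T ⊆ A then (1:ℝ) else 0)]
  rw [Finset.sum_boole, Finset.filter_filter]
  have h : (Finset.univ.filter (fun T : Finset (Fin d) => (T.Nonempty ∧ T.card ≤ 2) ∧ T ⊆ A)) =
      A.powersetCard 1 ∪ A.powersetCard 2 := by
    ext T
    simp only [Finset.mem_filter, Finset.mem_univ, true_and, Finset.mem_union,
      Finset.mem_powersetCard, ← Finset.card_pos]
    constructor
    · rintro ⟨⟨h1, h2⟩, h3⟩
      have : T.card = 1 ∨ T.card = 2 := by omega
      rcases this with h | h
      · exact Or.inl ⟨h3, h⟩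
      · exact Or.inr ⟨h3, h⟩
    · rintro (⟨h3, h⟩ | ⟨h3, h⟩) <;> exact ⟨⟨by omega, by omega⟩, h3⟩
  rw [h, Finset.card_union_of_disjoint, Finset.card_powersetCard, Finset.card_powersetCard]
  · rw [Finset.disjoint_left]
    intro T h1 h2
    simp only [Finset.mem_powersetCard] at h1 h2
    omega

lemma indicator_card (d : ℕ) (A : Finset (Fin d)) :
    ∑ j : Fin d, (if j ∈ A then (1:ℝ) else 0) = (A.card : ℝ) := by
  rw [Finset.sum_boole]
  simp

/-- For a paired weighted sample, the difference between the column-averaged rows of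
`X̃₁ᵀX̃_{≤2}` and `X̃₁ᵀX̃₁` is constant in `i`, with the stated closed form; in particular it
is annihilated by `P_d`. -/
theorem paired_ones_direction
    (d r : ℕ) (hd : 1 ≤ d)
    (S : Fin r × Bool → Finset (Fin d)) (w : Fin r × Bool → ℝ)
    (hw : ∀ ℓ, 0 < w ℓ)
    (hpairS : ∀ j : Fin r, S (j, true) = (Finset.univ : Finset (Fin d)) \ S (j, false))
    (hpairw : ∀ j : Fin r, w (j, true) = w (j, false))
    (u : Fin d → ℝ)
    (hu : ∀ i : Fin d, u i =
      (1 / ((d.choose 1 + d.choose 2 : ℕ) : ℝ)) *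
          (∑ T : {T : Finset (Fin d) // T.Nonempty ∧ T.card ≤ 2},
            ((X1mat d r S w).transpose * X2mat d r S w) i T) -
        (1 / (d : ℝ)) * ∑ j : Fin d, ((X1mat d r S w).transpose * X1mat d r S w) i j) :
    (∀ i : Fin d, u i =
      (1 / (2 * (d : ℝ) * ((d : ℝ) + 1))) *
        ∑ ℓ, w ℓ * ((S ℓ).card : ℝ) * (((S ℓ).card : ℝ) - (d : ℝ))) ∧
      (projOnes d).mulVec u = 0 := by
  classical
  have hd0 : (d : ℝ) ≠ 0 := by
    have : (0:ℝ) < d := by exact_mod_cast Nat.lt_of_lt_of_le Nat.zero_lt_one hd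
    linarith
  have hd1 : (d : ℝ) + 1 ≠ 0 := by
    have : (0:ℝ) ≤ (d:ℝ) := Nat.cast_nonneg d
    linarith
  set C : ℝ := (1 / (2 * (d : ℝ) * ((d : ℝ) + 1))) *
      ∑ ℓ, w ℓ * ((S ℓ).card : ℝ) * (((S ℓ).card : ℝ) - (d : ℝ)) with hC
  have hform : ∀ i : Fin d, u i = C := by
    intro i
    rw [hu i]
    have e2 : (∑ T : {T : Finset (Fin d) // T.Nonempty ∧ T.card ≤ 2},
        ((X1mat d r S w).transpose * X2mat d r S w) i T) =
        ∑ ℓ, w ℓ * (if i ∈ S ℓ then (1:ℝ) else 0) *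
          (((S ℓ).card.choose 1 + (S ℓ).card.choose 2 : ℕ) : ℝ) := by
      simp only [Matrix.mul_apply, Matrix.transpose_apply, X1mat, X2mat]
      rw [Finset.sum_comm]
      refine Finset.sum_congr rfl fun ℓ _ => ?_
      rw [← count_small_subsets d (S ℓ), Finset.mul_sum]
      refine Finset.sum_congr rfl fun T _ => ?_
      have hs : Real.sqrt (w ℓ) * Real.sqrt (w ℓ) = w ℓ := Real.mul_self_sqrt (hw ℓ).le
      calc (Real.sqrt (w ℓ) * (if i ∈ S ℓ then (1:ℝ) else 0)) *
            (Real.sqrt (w ℓ) * (if (T : Finset (Fin d)) ⊆ S ℓ then (1:ℝ) else 0))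
          = (Real.sqrt (w ℓ) * Real.sqrt (w ℓ)) * ((if i ∈ S ℓ then (1:ℝ) else 0) *
            (if (T : Finset (Fin d)) ⊆ S ℓ then (1:ℝ) else 0)) := by ring
        _ = w ℓ * (if i ∈ S ℓ then (1:ℝ) else 0) *
            (if (T : Finset (Fin d)) ⊆ S ℓ then (1:ℝ) else 0) := by rw [hs]; ring
    have e1 : (∑ j : Fin d, ((X1mat d r S w).transpose * X1mat d r S w) i j) =
        ∑ ℓ, w ℓ * (if i ∈ S ℓ then (1:ℝ) else 0) * ((S ℓ).card : ℝ) := by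
      simp only [Matrix.mul_apply, Matrix.transpose_apply, X1mat]
      rw [Finset.sum_comm]
      refine Finset.sum_congr rfl fun ℓ _ => ?_
      rw [← indicator_card d (S ℓ), Finset.mul_sum]
      refine Finset.sum_congr rfl fun j _ => ?_
      have hs : Real.sqrt (w ℓ) * Real.sqrt (w ℓ) = w ℓ := Real.mul_self_sqrt (hw ℓ).le
      calc (Real.sqrt (w ℓ) * (if i ∈ S ℓ then (1:ℝ) else 0)) *
            (Real.sqrt (w ℓ) * (if j ∈ S ℓ then (1:ℝ) else 0))
          = (Real.sqrt (w ℓ) * Real.sqrt (w ℓ)) * ((if i ∈ S ℓ then (1:ℝ) else 0) *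
            (if j ∈ S ℓ then (1:ℝ) else 0)) := by ring
        _ = w ℓ * (if i ∈ S ℓ then (1:ℝ) else 0) * (if j ∈ S ℓ then (1:ℝ) else 0) := by
            rw [hs]; ring
    rw [e2, e1, Finset.mul_sum, Finset.mul_sum, ← Finset.sum_sub_distrib]
    have step : ∀ ℓ, (1 / ((d.choose 1 + d.choose 2 : ℕ) : ℝ)) *
        (w ℓ * (if i ∈ S ℓ then (1:ℝ) else 0) *
          (((S ℓ).card.choose 1 + (S ℓ).card.choose 2 : ℕ) : ℝ)) -
        (1 / (d : ℝ)) * (w ℓ * (if i ∈ S ℓ then (1:ℝ) else 0) * ((S ℓ).card : ℝ)) =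
        w ℓ * (if i ∈ S ℓ then (1:ℝ) else 0) *
          (((S ℓ).card : ℝ) * (((S ℓ).card : ℝ) - (d : ℝ)) / ((d : ℝ) * ((d : ℝ) + 1))) := by
      intro ℓ
      rw [choose_triangle_real, choose_triangle_real]
      by_cases hi : i ∈ S ℓ
      · simp only [if_pos hi, mul_one]
        field_simp
        ring
      · simp [if_neg hi]
    rw [Finset.sum_congr rfl (fun ℓ _ => step ℓ), hC, Finset.mul_sum]
    rw [Fintype.sum_prod_type, Fintype.sum_prod_type]
    refine Finset.sum_congr rfl fun j _ => ?_
    rw [Fintype.sum_bool, Fintype.sum_bool, hpairS j, hpairw j]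
    have hsle : (S (j, false)).card ≤ d := by
      have := Finset.card_le_card (Finset.subset_univ (S (j, false)))
      simpa using this
    have hcA : (((Finset.univ : Finset (Fin d)) \ S (j, false)).card : ℝ) =
        (d : ℝ) - ((S (j, false)).card : ℝ) := by
      rw [Finset.card_sdiff_of_subset (Finset.subset_univ _), Finset.card_univ, Fintype.card_fin,
        Nat.cast_sub hsle]
    rw [hcA]
    by_cases hi : i ∈ S (j, false)
    · have hi' : i ∉ (Finset.univ : Finset (Fin d)) \ S (j, false) := by
        simp [Finset.mem_sdiff, hi]
      rw [if_pos hi, if_neg hi']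
      field_simp
      ring
    · have hi' : i ∈ (Finset.univ : Finset (Fin d)) \ S (j, false) := by
        simp [Finset.mem_sdiff, hi]
      rw [if_neg hi, if_pos hi']
      field_simp
      ring
  refine ⟨hform, ?_⟩
  funext i
  simp only [Matrix.mulVec, dotProduct, projOnes, Matrix.sub_apply, Matrix.smul_apply,
    Matrix.one_apply, Matrix.of_apply, Pi.zero_apply, smul_eq_mul, mul_one, sub_mul]
  rw [Finset.sum_sub_distrib]
  have h1 : ∑ j : Fin d, (if i = j then (1:ℝ) else 0) * u j = u i := by
    simp [ite_mul]
  have h2 : ∑ j : Fin d, (d : ℝ)⁻¹ * u j = (d : ℝ)⁻¹ * ((d : ℝ) * C) := by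
    rw [← Finset.mul_sum]
    congr 1
    rw [Finset.sum_congr rfl (fun j _ => hform j), Finset.sum_const, Finset.card_univ,
      Fintype.card_fin]
    simp [mul_comm]
  rw [h1, h2, hform i]
  field_simp
  ring
end
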